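/- arXiv:2305.13255 — 3 statements merged into one kernel-verified Lean document; each statement's English description precedes it below -/
import Mathlib

section
/- Let m be a positive integer, p > 0 with m > p + 1, let f: ℝ → ℝ satisfy hypothesis H(m) with x ↦ x·f(x) absolutely integrable, and let θ ∈ {e,o}. Then the functions x ↦ φ_p^θ(x,ρ) converge uniformly on ℝ to the identically zero function as ρ → 0⁺; and for every integer k with 0 < k < m - p - 1 the functions x ↦ ∂^k φ_p^θ/∂x^k (x,ρ) also converge uniformly on ℝ to zero as ρ → 0⁺. -/
open MeasureTheory Filter

/-- Even kernel `Λ_p^e`. -/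
noncomputable def LamE (p : ℝ) (z : ℝ) : ℝ :=
  (1 / Real.sqrt (2 * Real.pi)) *
    ∑' n : ℕ, (-1 : ℝ) ^ n * (∏ k ∈ Finset.range n, (p + 2 * (k : ℝ) + 1)) *
      z ^ (2 * n) / (Nat.factorial (2 * n) : ℝ)

/-- Odd kernel `Λ_p^o`. -/
noncomputable def LamO (p : ℝ) (z : ℝ) : ℝ :=
  (1 / Real.sqrt (2 * Real.pi)) *
    ∑' n : ℕ, (-1 : ℝ) ^ n * (∏ k ∈ Finset.range (n + 1), (p + 2 * (k : ℝ))) *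
      z ^ (2 * n + 1) / (Nat.factorial (2 * n + 1) : ℝ)

/-- Fourier transform of a real-valued integrable function. -/
noncomputable def FT (g : ℝ → ℝ) (ω : ℝ) : ℂ :=
  ∫ x : ℝ, (g x : ℂ) * Complex.exp (-(Complex.I * ω * x))

/-- Parity index. -/
inductive Theta | e | o

/-- The kernel of parity `θ`. -/
noncomputable def Lam : Theta → ℝ → ℝ → ℝ
  | Theta.e => LamE
  | Theta.o => LamO

/-- The convolution `φ_p^θ(x,ρ)`. -/
noncomputable def phi (f : ℝ → ℝ) (θ : Theta) (p x ρ : ℝ) : ℝ :=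
  ∫ ν : ℝ, f (x - ν) * ρ ^ (p + 1) * Lam θ p (ν * ρ)

/-- The multiplier `M_p^θ(ω)`. -/
noncomputable def Mker (θ : Theta) (c d p : ℝ) (ω : ℝ) : ℂ :=
  match θ with
  | Theta.e => ((c * |ω| ^ p : ℝ) : ℂ)
  | Theta.o => Complex.I * (d : ℂ) * ((Real.sign ω : ℝ) : ℂ) * ((|ω| ^ p : ℝ) : ℂ)

/-- Hypothesis H(m). -/
def HypH (m : ℕ) (f : ℝ → ℝ) : Prop :=
  ContDiff ℝ m f ∧ ∀ i : ℕ, i ≤ m → MeasureTheory.Integrable (iteratedDeriv i f)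

/-- Fourier transform of a complex-valued function. -/
noncomputable def FTc (g : ℝ → ℂ) (ω : ℝ) : ℂ :=
  ∫ x : ℝ, g x * Complex.exp (-(Complex.I * ω * x))

/-- The limit `f_p^θ(x)`. -/
noncomputable def flim (f : ℝ → ℝ) (θ : Theta) (c d p : ℝ) (x : ℝ) : ℝ :=
  (((1 / (2 * Real.pi) : ℝ) : ℂ) *
    ∫ ω : ℝ, FT f ω * Mker θ c d p ω * Complex.exp (Complex.I * ω * x)).re

/-- The scale-space function `Ψ_p^θ(x,σ)`. -/
noncomputable def Psi (f : ℝ → ℝ) (θ : Theta) (c d p : ℝ) (x σ : ℝ) : ℝ :=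
  (((1 / (2 * Real.pi) : ℝ) : ℂ) *
    ∫ ω : ℝ, FT f ω * Mker θ c d p ω * ((Real.exp (-(ω ^ 2 * σ ^ 2) / 2) : ℝ) : ℂ) *
      Complex.exp (Complex.I * ω * x)).re

noncomputable def gm (q : ℝ) : ℝ := ∫ ω in Set.Ioi (0:ℝ), ω ^ q * Real.exp (-(1/2) * ω ^ 2)

lemma gm_integrableOn {q : ℝ} (hq : -1 < q) :
    IntegrableOn (fun ω : ℝ => ω ^ q * Real.exp (-(1/2) * ω ^ 2)) (Set.Ioi 0) :=
  integrableOn_rpow_mul_exp_neg_mul_sq (by norm_num) hq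

lemma gm_nonneg {q : ℝ} : 0 ≤ gm q := by
  apply setIntegral_nonneg measurableSet_Ioi
  intro ω hω
  have h1 : (0:ℝ) ≤ ω ^ q := (Real.rpow_pos_of_pos hω q).le
  positivity

lemma gm_pos {q : ℝ} (hq : -1 < q) : 0 < gm q := by
  rw [gm, setIntegral_pos_iff_support_of_nonneg_ae _ (gm_integrableOn hq)]
  · have hs : Set.Ioi (0:ℝ) ⊆ Function.support (fun ω : ℝ => ω ^ q * Real.exp (-(1/2) * ω ^ 2)) := by
      intro ω hω
      have h1 : (0:ℝ) < ω ^ q := Real.rpow_pos_of_pos hω q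
      have h2 : (0:ℝ) < Real.exp (-(1/2) * ω ^ 2) := Real.exp_pos _
      simp only [Function.mem_support]
      positivity
    have hs' : Set.Ioi (0:ℝ) ⊆ Function.support _ ∩ Set.Ioi 0 := fun ω hω => ⟨hs hω, hω⟩
    calc (0:ENNReal) < volume (Set.Ioi (0:ℝ)) := by simp
      _ ≤ _ := measure_mono hs'
  · filter_upwards [ae_restrict_mem measurableSet_Ioi] with ω hω
    have h1 : (0:ℝ) ≤ ω ^ q := (Real.rpow_pos_of_pos hω q).le
    positivity

lemma gm_tendsto_zero {q : ℝ} :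
    Tendsto (fun ω : ℝ => ω ^ q * Real.exp (-(1/2) * ω ^ 2)) atTop (nhds 0) := by
  apply (rpow_mul_exp_neg_mul_sq_isLittleO_exp_neg (by norm_num : (0:ℝ) < 1/2) q).tendsto_zero_of_tendsto
  exact Real.tendsto_exp_atBot.comp (tendsto_atBot_mono (fun x => le_refl _) ((tendsto_const_mul_atBot_of_neg (by norm_num)).mpr tendsto_id))

lemma gm_rec {q : ℝ} (hq : -1 < q) : gm (q + 2) = (q + 1) * gm q := by
  have hcont : ContinuousWithinAt (fun ω : ℝ => ω ^ (q+1) * Real.exp (-(1/2) * ω ^ 2)) (Set.Ici 0) 0 := by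
    apply ContinuousWithinAt.mul _ (Real.continuous_exp.comp (by continuity)).continuousWithinAt
    exact (Real.continuousAt_rpow_const 0 (q+1) (Or.inr (by linarith))).continuousWithinAt
  have hderiv : ∀ ω ∈ Set.Ioi (0:ℝ), HasDerivAt (fun ω : ℝ => ω ^ (q+1) * Real.exp (-(1/2) * ω ^ 2))
      ((q+1) * (ω ^ q * Real.exp (-(1/2) * ω ^ 2)) - ω ^ (q+2) * Real.exp (-(1/2) * ω ^ 2)) ω := by
    intro ω hω
    have hω0 : ω ≠ 0 := ne_of_gt hω
    have h1 : HasDerivAt (fun x : ℝ => x ^ (q+1)) ((q+1) * ω ^ q) ω := by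
      simpa using Real.hasDerivAt_rpow_const (p := q+1) (Or.inl hω0)
    have h2 : HasDerivAt (fun x : ℝ => Real.exp (-(1/2) * x ^ 2)) (-ω * Real.exp (-(1/2) * ω ^ 2)) ω := by
      have h3 : HasDerivAt (fun x : ℝ => -(1/2) * x ^ 2) (-ω) ω := by
        simpa using ((hasDerivAt_pow 2 ω).const_mul (-(1/2):ℝ))
      simpa [mul_comm] using h3.exp
    have h4 := h1.mul h2
    refine h4.congr_deriv ?_
    have hrw1 : ω ^ (q+1) = ω ^ q * ω := by rw [Real.rpow_add hω, Real.rpow_one]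
    have hrw2 : ω ^ (q+2) = ω ^ q * ω * ω := by
      rw [show q + 2 = q + 1 + 1 by ring, Real.rpow_add hω, Real.rpow_one, hrw1]
    rw [hrw1, hrw2]
    ring
  have hint : IntegrableOn (fun ω : ℝ =>
      (q+1) * (ω ^ q * Real.exp (-(1/2) * ω ^ 2)) - ω ^ (q+2) * Real.exp (-(1/2) * ω ^ 2)) (Set.Ioi 0) :=
    ((gm_integrableOn hq).const_mul _).sub (gm_integrableOn (by linarith))
  have htend : Tendsto (fun ω : ℝ => ω ^ (q+1) * Real.exp (-(1/2) * ω ^ 2)) atTop (nhds 0) :=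
    gm_tendsto_zero
  have key := integral_Ioi_of_hasDerivAt_of_tendsto hcont hderiv hint htend
  rw [integral_sub ((gm_integrableOn hq).const_mul _) (gm_integrableOn (by linarith)),
    integral_const_mul] at key
  have h0 : ((0:ℝ) ^ (q+1) * Real.exp (-(1/2) * (0:ℝ) ^ 2)) = 0 := by
    rw [Real.zero_rpow (by linarith : q + 1 ≠ 0)]; ring
  rw [h0] at key
  have : (q+1) * gm q - gm (q+2) = 0 := by simpa [gm] using key
  linarith

/-- The oscillatory Gaussian integral kernel. -/
noncomputable def Fk (q c z : ℝ) : ℝ :=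
  ∫ ω in Set.Ioi (0:ℝ), ω ^ q * Real.exp (-(1/2) * ω ^ 2) * Real.cos (ω * z + c)

lemma Fk_integrableOn (q c z : ℝ) (hq : 0 ≤ q) :
    IntegrableOn (fun ω : ℝ => ω ^ q * Real.exp (-(1/2) * ω ^ 2) * Real.cos (ω * z + c))
      (Set.Ioi 0) := by
  apply Integrable.mono' (gm_integrableOn (by linarith))
  · apply Continuous.aestronglyMeasurable
    exact ((Real.continuous_rpow_const hq).mul (Real.continuous_exp.comp (by continuity))).mul
      (Real.continuous_cos.comp (by continuity))
  · filter_upwards [ae_restrict_mem measurableSet_Ioi] with ω hω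
    have h1 : (0:ℝ) ≤ ω ^ q := (Real.rpow_pos_of_pos hω q).le
    rw [Real.norm_eq_abs, abs_mul]
    have : |Real.cos (ω * z + c)| ≤ 1 := Real.abs_cos_le_one _
    calc |ω ^ q * Real.exp (-(1/2) * ω ^ 2)| * |Real.cos (ω * z + c)|
        ≤ |ω ^ q * Real.exp (-(1/2) * ω ^ 2)| * 1 := by
          exact mul_le_mul_of_nonneg_left this (abs_nonneg _)
      _ = ω ^ q * Real.exp (-(1/2) * ω ^ 2) := by
          rw [mul_one, abs_of_nonneg (by positivity)]

lemma Fk_abs_le (q c z : ℝ) (hq : 0 ≤ q) : |Fk q c z| ≤ gm q := by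
  rw [Fk, ← Real.norm_eq_abs]
  apply norm_integral_le_of_norm_le (gm_integrableOn (by linarith))
  filter_upwards [ae_restrict_mem measurableSet_Ioi] with ω hω
  have h1 : (0:ℝ) ≤ ω ^ q := (Real.rpow_pos_of_pos hω q).le
  rw [Real.norm_eq_abs, abs_mul]
  calc |ω ^ q * Real.exp (-(1/2) * ω ^ 2)| * |Real.cos (ω * z + c)|
      ≤ |ω ^ q * Real.exp (-(1/2) * ω ^ 2)| * 1 :=
        mul_le_mul_of_nonneg_left (Real.abs_cos_le_one _) (abs_nonneg _)
    _ = ω ^ q * Real.exp (-(1/2) * ω ^ 2) := by rw [mul_one, abs_of_nonneg (by positivity)]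

lemma Fk_hasDerivAt (q c : ℝ) (hq : 0 ≤ q) (z : ℝ) :
    HasDerivAt (fun z => Fk q c z) (Fk (q+1) (c + Real.pi/2) z) z := by
  have main := hasDerivAt_integral_of_dominated_loc_of_deriv_le
    (μ := volume.restrict (Set.Ioi (0:ℝ))) (𝕜 := ℝ)
    (F := fun z ω => ω ^ q * Real.exp (-(1/2) * ω ^ 2) * Real.cos (ω * z + c))
    (F' := fun z ω => ω ^ (q+1) * Real.exp (-(1/2) * ω ^ 2) * Real.cos (ω * z + (c + Real.pi/2)))
    (x₀ := z) (s := Metric.ball z 1) (bound := fun ω => ω ^ (q+1) * Real.exp (-(1/2) * ω ^ 2))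
    (Metric.ball_mem_nhds z one_pos) ?_ ?_ ?_ ?_ ?_ ?_
  · exact main.2
  · filter_upwards with x
    exact (Fk_integrableOn q c x hq).aestronglyMeasurable
  · exact Fk_integrableOn q c z hq
  · exact (Fk_integrableOn (q+1) (c + Real.pi/2) z (by linarith)).aestronglyMeasurable
  · filter_upwards [ae_restrict_mem measurableSet_Ioi] with ω hω
    intro x _
    have h1 : (0:ℝ) ≤ ω ^ (q+1) := (Real.rpow_pos_of_pos hω (q+1)).le
    rw [Real.norm_eq_abs, abs_mul]
    calc |ω ^ (q+1) * Real.exp (-(1/2) * ω ^ 2)| * |Real.cos (ω * x + (c + Real.pi/2))|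
        ≤ |ω ^ (q+1) * Real.exp (-(1/2) * ω ^ 2)| * 1 :=
          mul_le_mul_of_nonneg_left (Real.abs_cos_le_one _) (abs_nonneg _)
      _ = ω ^ (q+1) * Real.exp (-(1/2) * ω ^ 2) := by rw [mul_one, abs_of_nonneg (by positivity)]
  · exact gm_integrableOn (by linarith)
  · filter_upwards [ae_restrict_mem measurableSet_Ioi] with ω hω
    intro x _
    have h1 : HasDerivAt (fun x : ℝ => ω * x + c) ω x := by
      simpa using ((hasDerivAt_id x).const_mul ω).add_const c
    have h2 : HasDerivAt (fun x : ℝ => Real.cos (ω * x + c))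
        (-Real.sin (ω * x + c) * ω) x := h1.cos
    have h3 := h2.const_mul (ω ^ q * Real.exp (-(1/2) * ω ^ 2))
    refine h3.congr_deriv ?_
    rw [show ω * x + (c + Real.pi/2) = (ω * x + c) + Real.pi/2 by ring, Real.cos_add_pi_div_two]
    have hrw : ω ^ (q+1) = ω ^ q * ω := by rw [Real.rpow_add hω, Real.rpow_one]
    rw [hrw]
    ring

lemma Fk_continuous (q c : ℝ) (hq : 0 ≤ q) : Continuous (fun z => Fk q c z) :=
  continuous_iff_continuousAt.2 fun z => (Fk_hasDerivAt q c hq z).continuousAt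

lemma gm_prod_e {p : ℝ} (hp : 0 < p) (n : ℕ) :
    gm (p + 2 * (n : ℝ)) = (∏ k ∈ Finset.range n, (p + 2 * (k : ℝ) + 1)) * gm p := by
  induction n with
  | zero => simp
  | succ n ih =>
    have h1 : p + 2 * ((n+1 : ℕ) : ℝ) = (p + 2 * (n : ℝ)) + 2 := by push_cast; ring
    have h2 : (-1:ℝ) < p + 2 * (n : ℝ) := by
      have : (0:ℝ) ≤ (n:ℝ) := Nat.cast_nonneg n
      linarith
    rw [h1, gm_rec h2, ih, Finset.prod_range_succ]
    ring

lemma prod_e_nonneg {p : ℝ} (hp : 0 < p) (n : ℕ) :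
    0 ≤ ∏ k ∈ Finset.range n, (p + 2 * (k : ℝ) + 1) := by
  apply Finset.prod_nonneg
  intro k _
  have : (0:ℝ) ≤ (k:ℝ) := Nat.cast_nonneg k
  linarith

lemma prod_e_le {p : ℝ} (hp : 0 < p) (n : ℕ) :
    (∏ k ∈ Finset.range n, (p + 2 * (k : ℝ) + 1)) ≤ 2^n * (p+1)^n * (Nat.factorial n : ℝ) := by
  induction n with
  | zero => simp
  | succ n ih =>
    rw [Finset.prod_range_succ, pow_succ, pow_succ, Nat.factorial_succ]
    push_cast
    have hfact : (0:ℝ) ≤ 2^n * (p+1)^n * (Nat.factorial n : ℝ) := by positivity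
    have hle : p + 2*(n:ℝ) + 1 ≤ 2 * (p+1) * ((n:ℝ)+1) := by nlinarith [(Nat.cast_nonneg n : (0:ℝ) ≤ (n:ℝ))]
    calc (∏ k ∈ Finset.range n, (p + 2 * (k : ℝ) + 1)) * (p + 2*(n:ℝ) + 1)
        ≤ (2^n * (p+1)^n * (Nat.factorial n : ℝ)) * (2 * (p+1) * ((n:ℝ)+1)) := by
          have hn : (0:ℝ) ≤ (n:ℝ) := Nat.cast_nonneg n
          exact mul_le_mul ih hle (by linarith) hfact
      _ = 2^n * 2 * ((p+1)^n * (p+1)) * (((n:ℝ)+1) * (Nat.factorial n : ℝ)) := by ring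

lemma fact_sq_le {n : ℕ} : ((Nat.factorial n : ℝ)) * (Nat.factorial n : ℝ) ≤ (Nat.factorial (2*n) : ℝ) := by
  have h := Nat.factorial_mul_factorial_dvd_factorial_add n n
  have h2 : Nat.factorial n * Nat.factorial n ≤ Nat.factorial (n + n) :=
    Nat.le_of_dvd (Nat.factorial_pos _) h
  have : n + n = 2 * n := by ring
  rw [this] at h2
  exact_mod_cast h2

lemma lamE_eq {p : ℝ} (hp : 0 < p) (z : ℝ) :
    LamE p z = (1 / Real.sqrt (2 * Real.pi)) * (Fk p 0 z / gm p) := by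
  have hgm : (0:ℝ) < gm p := gm_pos (by linarith)
  set μ := volume.restrict (Set.Ioi (0:ℝ)) with hμ
  set F : ℕ → ℝ → ℝ := fun n ω =>
    (ω ^ p * Real.exp (-(1/2) * ω ^ 2)) * ((-1:ℝ)^n * (ω*z)^(2*n) / (Nat.factorial (2*n) : ℝ))
    with hF
  -- integral of each term
  have hint : ∀ n : ℕ, ∫ ω, F n ω ∂μ =
      ((-1:ℝ)^n * z^(2*n) / (Nat.factorial (2*n) : ℝ)) * gm (p + 2*(n:ℝ)) := by
    intro n
    have : ∀ ω ∈ Set.Ioi (0:ℝ), F n ω =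
        ((-1:ℝ)^n * z^(2*n) / (Nat.factorial (2*n) : ℝ)) *
          (ω ^ (p + 2*(n:ℝ)) * Real.exp (-(1/2) * ω ^ 2)) := by
      intro ω hω
      have hrw : ω ^ (p + 2*(n:ℝ)) = ω ^ p * ω ^ (2*n) := by
        rw [show p + 2*(n:ℝ) = p + ((2*n : ℕ):ℝ) by push_cast; ring, Real.rpow_add hω,
          Real.rpow_natCast]
      rw [hF]
      simp only []
      rw [hrw, mul_pow]
      ring
    rw [hμ, setIntegral_congr_fun measurableSet_Ioi this, integral_const_mul]
    rfl
  -- integrability of each term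
  have hintg : ∀ n : ℕ, Integrable (F n) μ := by
    intro n
    rw [hμ]
    apply IntegrableOn.congr_fun
      (f := fun ω => ((-1:ℝ)^n * z^(2*n) / (Nat.factorial (2*n) : ℝ)) *
          (ω ^ (p + 2*(n:ℝ)) * Real.exp (-(1/2) * ω ^ 2)))
    · apply Integrable.const_mul
      apply gm_integrableOn
      have : (0:ℝ) ≤ (n:ℝ) := Nat.cast_nonneg n
      linarith
    · intro ω hω
      have hrw : ω ^ (p + 2*(n:ℝ)) = ω ^ p * ω ^ (2*n) := by
        rw [show p + 2*(n:ℝ) = p + ((2*n : ℕ):ℝ) by push_cast; ring, Real.rpow_add hω,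
          Real.rpow_natCast]
      rw [hF]
      simp only []
      rw [hrw, mul_pow]
      ring
    · exact measurableSet_Ioi
  -- norms
  have hnorm : ∀ n : ℕ, ∫ ω, ‖F n ω‖ ∂μ =
      (z^(2*n) / (Nat.factorial (2*n) : ℝ)) * gm (p + 2*(n:ℝ)) := by
    intro n
    have : ∀ ω ∈ Set.Ioi (0:ℝ), ‖F n ω‖ =
        (z^(2*n) / (Nat.factorial (2*n) : ℝ)) *
          (ω ^ (p + 2*(n:ℝ)) * Real.exp (-(1/2) * ω ^ 2)) := by
      intro ω hω
      have hz2 : (0:ℝ) ≤ z^(2*n) := by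
        rw [pow_mul]; positivity
      have hω2 : (0:ℝ) ≤ (ω*z)^(2*n) := by
        rw [pow_mul]; positivity
      have h1 : (0:ℝ) ≤ ω ^ p := (Real.rpow_pos_of_pos hω p).le
      have hrw : ω ^ (p + 2*(n:ℝ)) = ω ^ p * ω ^ (2*n) := by
        rw [show p + 2*(n:ℝ) = p + ((2*n : ℕ):ℝ) by push_cast; ring, Real.rpow_add hω,
          Real.rpow_natCast]
      rw [hF]
      simp only []
      rw [Real.norm_eq_abs, abs_mul, abs_of_nonneg (by positivity : (0:ℝ) ≤ ω ^ p * Real.exp (-(1/2) * ω ^ 2))]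
      rw [abs_div, abs_mul, abs_pow, abs_neg, abs_one, one_pow, one_mul,
        abs_of_nonneg hω2, Nat.abs_cast, hrw, mul_pow]
      ring
    rw [hμ, setIntegral_congr_fun measurableSet_Ioi this, integral_const_mul]
    rfl
  -- summability of norms
  have hsum : Summable (fun n => ∫ ω, ‖F n ω‖ ∂μ) := by
    apply Summable.of_nonneg_of_le
      (f := fun n => gm p * ((2*(p+1)*z^2)^n / (Nat.factorial n : ℝ)))
    · intro n
      rw [hnorm n]
      have hz2 : (0:ℝ) ≤ z^(2*n) := by rw [pow_mul]; positivity
      have hg : (0:ℝ) ≤ gm (p + 2*(n:ℝ)) := gm_nonneg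
      have hfp : (0:ℝ) < ((Nat.factorial (2*n) : ℕ) : ℝ) := by
        exact_mod_cast Nat.factorial_pos _
      positivity
    · intro n
      rw [hnorm n, gm_prod_e hp n]
      set A := ∏ k ∈ Finset.range n, (p + 2 * (k : ℝ) + 1) with hA
      have hAnn : 0 ≤ A := prod_e_nonneg hp n
      have key : (z^2)^n * A * ((Nat.factorial n : ℕ) : ℝ) ≤
          (2*(p+1)*z^2)^n * ((Nat.factorial (2*n) : ℕ) : ℝ) := by
        have e1 : (2*(p+1)*z^2)^n = 2^n*(p+1)^n*(z^2)^n := by rw [mul_pow, mul_pow]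
        calc (z^2)^n * A * ((Nat.factorial n : ℕ) : ℝ)
            ≤ (z^2)^n * (2^n*(p+1)^n*((Nat.factorial n : ℕ) : ℝ)) * ((Nat.factorial n : ℕ) : ℝ) := by
              apply mul_le_mul_of_nonneg_right
                (mul_le_mul_of_nonneg_left (prod_e_le hp n) (by positivity)) (by positivity)
          _ = 2^n*(p+1)^n*(z^2)^n * (((Nat.factorial n : ℕ) : ℝ) * ((Nat.factorial n : ℕ) : ℝ)) := by
              ring
          _ ≤ 2^n*(p+1)^n*(z^2)^n * ((Nat.factorial (2*n) : ℕ) : ℝ) :=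
              mul_le_mul_of_nonneg_left fact_sq_le (by positivity)
          _ = (2*(p+1)*z^2)^n * ((Nat.factorial (2*n) : ℕ) : ℝ) := by rw [e1]
      have hf1 : (0:ℝ) < ((Nat.factorial (2*n) : ℕ) : ℝ) := by exact_mod_cast Nat.factorial_pos _
      have hf2 : (0:ℝ) < ((Nat.factorial n : ℕ) : ℝ) := by exact_mod_cast Nat.factorial_pos _
      rw [pow_mul]
      have lhs_eq : (z^2)^n / ((Nat.factorial (2*n) : ℕ) : ℝ) * (A * gm p)
          = ((z^2)^n * A * gm p) / ((Nat.factorial (2*n) : ℕ) : ℝ) := by ring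
      have rhs_eq : gm p * ((2*(p+1)*z^2)^n / ((Nat.factorial n : ℕ) : ℝ))
          = (gm p * (2*(p+1)*z^2)^n) / ((Nat.factorial n : ℕ) : ℝ) := by ring
      rw [lhs_eq, rhs_eq, div_le_div_iff₀ hf1 hf2]
      calc (z^2)^n * A * gm p * ((Nat.factorial n : ℕ) : ℝ)
          = gm p * ((z^2)^n * A * ((Nat.factorial n : ℕ) : ℝ)) := by ring
        _ ≤ gm p * ((2*(p+1)*z^2)^n * ((Nat.factorial (2*n) : ℕ) : ℝ)) :=
            mul_le_mul_of_nonneg_left key gm_nonneg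
        _ = gm p * (2*(p+1)*z^2)^n * ((Nat.factorial (2*n) : ℕ) : ℝ) := by ring
    · exact (Real.summable_pow_div_factorial (2*(p+1)*z^2)).mul_left (gm p)
  -- assemble
  have hHasSum := hasSum_integral_of_summable_integral_norm hintg hsum
  have hptw : (fun ω => ∑' n, F n ω)
      = fun ω => ω ^ p * Real.exp (-(1/2) * ω ^ 2) * Real.cos (ω * z + 0) := by
    funext ω
    rw [hF]
    simp only []
    rw [tsum_mul_left, add_zero]
    congr 1
    exact (Real.cos_eq_tsum (ω*z)).symm
  have hFk : ∫ ω, (∑' n, F n ω) ∂μ = Fk p 0 z := by rw [hptw]; rfl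
  rw [hFk] at hHasSum
  have hfun : (fun n => ∫ ω, F n ω ∂μ)
      = fun n => ((-1:ℝ)^n * (∏ k ∈ Finset.range n, (p + 2*(k:ℝ)+1)) * z^(2*n)
          / ((Nat.factorial (2*n) : ℕ) : ℝ)) * gm p := by
    funext n
    rw [hint n, gm_prod_e hp n]
    ring
  rw [hfun] at hHasSum
  have hT : HasSum (fun n : ℕ => (-1:ℝ)^n * (∏ k ∈ Finset.range n, (p + 2*(k:ℝ)+1)) * z^(2*n)
      / ((Nat.factorial (2*n) : ℕ) : ℝ)) (Fk p 0 z / gm p) := by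
    have h2 := hHasSum.div_const (gm p)
    simpa [mul_div_cancel_right₀ _ hgm.ne'] using h2
  rw [LamE, hT.tsum_eq]

lemma gm_prod_o {p : ℝ} (hp : 0 < p) (n : ℕ) :
    gm (p + (2 * (n : ℝ) + 1)) = (∏ k ∈ Finset.range (n + 1), (p + 2 * (k : ℝ))) * gm (p - 1) := by
  induction n with
  | zero =>
    have h1 : p + (2 * ((0:ℕ) : ℝ) + 1) = (p - 1) + 2 := by push_cast; ring
    rw [h1, gm_rec (by linarith), Finset.prod_range_one]
    push_cast
    ring
  | succ n ih =>
    have h1 : p + (2 * ((n+1 : ℕ) : ℝ) + 1) = (p + (2 * (n : ℝ) + 1)) + 2 := by push_cast; ring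
    have h2 : (-1:ℝ) < p + (2 * (n : ℝ) + 1) := by
      have : (0:ℝ) ≤ (n:ℝ) := Nat.cast_nonneg n
      linarith
    rw [h1, gm_rec h2, ih]
    conv_rhs => rw [Finset.prod_range_succ]
    push_cast
    ring

lemma prod_o_nonneg {p : ℝ} (hp : 0 < p) (n : ℕ) :
    0 ≤ ∏ k ∈ Finset.range (n + 1), (p + 2 * (k : ℝ)) := by
  apply Finset.prod_nonneg
  intro k _
  have : (0:ℝ) ≤ (k:ℝ) := Nat.cast_nonneg k
  linarith

lemma prod_o_le {p : ℝ} (hp : 0 < p) (n : ℕ) :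
    (∏ k ∈ Finset.range (n + 1), (p + 2 * (k : ℝ)))
      ≤ 2^(n+1) * (p+1)^(n+1) * (Nat.factorial (n+1) : ℝ) := by
  induction n with
  | zero =>
    simp
    nlinarith
  | succ n ih =>
    rw [Finset.prod_range_succ, pow_succ 2 (n+1), pow_succ (p+1) (n+1), Nat.factorial_succ (n+1)]
    push_cast
    have hfact : (0:ℝ) ≤ 2^(n+1) * (p+1)^(n+1) * (Nat.factorial (n+1) : ℝ) := by positivity
    have hn : (0:ℝ) ≤ (n:ℝ) := Nat.cast_nonneg n
    have hle : p + 2*((n:ℝ)+1) ≤ 2 * (p+1) * ((n:ℝ)+1+1) := by nlinarith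
    calc (∏ k ∈ Finset.range (n+1), (p + 2 * (k : ℝ))) * (p + 2*((n:ℝ)+1))
        ≤ (2^(n+1) * (p+1)^(n+1) * (Nat.factorial (n+1) : ℝ)) * (2 * (p+1) * ((n:ℝ)+1+1)) :=
          mul_le_mul ih hle (by linarith) hfact
      _ = 2^(n+1) * 2 * ((p+1)^(n+1) * (p+1)) * (((n:ℝ)+1+1) * (Nat.factorial (n+1) : ℝ)) := by
          ring

lemma fact_sq_le_odd {n : ℕ} :
    ((Nat.factorial (n+1) : ℕ) : ℝ) * ((Nat.factorial n : ℕ) : ℝ)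
      ≤ ((Nat.factorial (2*n+1) : ℕ) : ℝ) := by
  have h := Nat.factorial_mul_factorial_dvd_factorial_add (n+1) n
  have h2 : Nat.factorial (n+1) * Nat.factorial n ≤ Nat.factorial ((n+1) + n) :=
    Nat.le_of_dvd (Nat.factorial_pos _) h
  have h3 : (n+1) + n = 2*n+1 := by ring
  rw [h3] at h2
  exact_mod_cast h2

lemma lamO_eq {p : ℝ} (hp : 0 < p) (z : ℝ) :
    LamO p z = (1 / Real.sqrt (2 * Real.pi)) * (Fk p (-(Real.pi/2)) z / gm (p-1)) := by
  have hgm : (0:ℝ) < gm (p-1) := gm_pos (by linarith)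
  set μ := volume.restrict (Set.Ioi (0:ℝ)) with hμ
  set F : ℕ → ℝ → ℝ := fun n ω =>
    (ω ^ p * Real.exp (-(1/2) * ω ^ 2)) *
      ((-1:ℝ)^n * (ω*z)^(2*n+1) / (Nat.factorial (2*n+1) : ℝ))
    with hF
  have hexp : ∀ (n : ℕ) (ω : ℝ), ω ∈ Set.Ioi (0:ℝ) →
      ω ^ (p + (2*(n:ℝ)+1)) = ω ^ p * ω ^ (2*n+1) := by
    intro n ω hω
    rw [show p + (2*(n:ℝ)+1) = p + ((2*n+1 : ℕ):ℝ) by push_cast; ring, Real.rpow_add hω,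
      Real.rpow_natCast]
  have hint : ∀ n : ℕ, ∫ ω, F n ω ∂μ =
      ((-1:ℝ)^n * z^(2*n+1) / (Nat.factorial (2*n+1) : ℝ)) * gm (p + (2*(n:ℝ)+1)) := by
    intro n
    have heq : ∀ ω ∈ Set.Ioi (0:ℝ), F n ω =
        ((-1:ℝ)^n * z^(2*n+1) / (Nat.factorial (2*n+1) : ℝ)) *
          (ω ^ (p + (2*(n:ℝ)+1)) * Real.exp (-(1/2) * ω ^ 2)) := by
      intro ω hω
      rw [hF]
      simp only []
      rw [hexp n ω hω, mul_pow]
      ring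
    rw [hμ, setIntegral_congr_fun measurableSet_Ioi heq, integral_const_mul]
    rfl
  have hintg : ∀ n : ℕ, Integrable (F n) μ := by
    intro n
    rw [hμ]
    apply IntegrableOn.congr_fun
      (f := fun ω => ((-1:ℝ)^n * z^(2*n+1) / (Nat.factorial (2*n+1) : ℝ)) *
          (ω ^ (p + (2*(n:ℝ)+1)) * Real.exp (-(1/2) * ω ^ 2)))
    · apply Integrable.const_mul
      apply gm_integrableOn
      have : (0:ℝ) ≤ (n:ℝ) := Nat.cast_nonneg n
      linarith
    · intro ω hω
      rw [hF]
      simp only []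
      rw [hexp n ω hω, mul_pow]
      ring
    · exact measurableSet_Ioi
  have hnorm : ∀ n : ℕ, ∫ ω, ‖F n ω‖ ∂μ =
      (|z|^(2*n+1) / (Nat.factorial (2*n+1) : ℝ)) * gm (p + (2*(n:ℝ)+1)) := by
    intro n
    have heq : ∀ ω ∈ Set.Ioi (0:ℝ), ‖F n ω‖ =
        (|z|^(2*n+1) / (Nat.factorial (2*n+1) : ℝ)) *
          (ω ^ (p + (2*(n:ℝ)+1)) * Real.exp (-(1/2) * ω ^ 2)) := by
      intro ω hω
      have h1 : (0:ℝ) ≤ ω ^ p := (Real.rpow_pos_of_pos hω p).le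
      rw [hF]
      simp only []
      rw [Real.norm_eq_abs, abs_mul,
        abs_of_nonneg (by positivity : (0:ℝ) ≤ ω ^ p * Real.exp (-(1/2) * ω ^ 2)),
        abs_div, abs_mul, abs_pow, abs_neg, abs_one, one_pow, one_mul, abs_pow, abs_mul,
        abs_of_pos hω, Nat.abs_cast, hexp n ω hω, mul_pow]
      ring
    rw [hμ, setIntegral_congr_fun measurableSet_Ioi heq, integral_const_mul]
    rfl
  have hsum : Summable (fun n => ∫ ω, ‖F n ω‖ ∂μ) := by
    apply Summable.of_nonneg_of_le
      (f := fun n => (gm (p-1) * (2*(p+1)*|z|)) * ((2*(p+1)*z^2)^n / (Nat.factorial n : ℝ)))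
    · intro n
      rw [hnorm n]
      have hg : (0:ℝ) ≤ gm (p + (2*(n:ℝ)+1)) := gm_nonneg
      have hfp : (0:ℝ) < ((Nat.factorial (2*n+1) : ℕ) : ℝ) := by
        exact_mod_cast Nat.factorial_pos _
      positivity
    · intro n
      rw [hnorm n, gm_prod_o hp n]
      set A := ∏ k ∈ Finset.range (n+1), (p + 2 * (k : ℝ)) with hA
      have hAnn : 0 ≤ A := prod_o_nonneg hp n
      have habs : |z|^(2*n+1) = (z^2)^n * |z| := by
        rw [pow_succ, pow_mul, sq_abs]
      have key : |z|^(2*n+1) * A * ((Nat.factorial n : ℕ) : ℝ) ≤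
          (2*(p+1)*|z|) * (2*(p+1)*z^2)^n * ((Nat.factorial (2*n+1) : ℕ) : ℝ) := by
        have e1 : (2*(p+1)*z^2)^n = 2^n*(p+1)^n*(z^2)^n := by rw [mul_pow, mul_pow]
        calc |z|^(2*n+1) * A * ((Nat.factorial n : ℕ) : ℝ)
            ≤ |z|^(2*n+1) * (2^(n+1)*(p+1)^(n+1)*((Nat.factorial (n+1) : ℕ) : ℝ))
                * ((Nat.factorial n : ℕ) : ℝ) := by
              apply mul_le_mul_of_nonneg_right
                (mul_le_mul_of_nonneg_left (prod_o_le hp n) (by positivity)) (by positivity)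
          _ = 2^(n+1)*(p+1)^(n+1)*|z|^(2*n+1)
                * (((Nat.factorial (n+1) : ℕ) : ℝ) * ((Nat.factorial n : ℕ) : ℝ)) := by ring
          _ ≤ 2^(n+1)*(p+1)^(n+1)*|z|^(2*n+1) * ((Nat.factorial (2*n+1) : ℕ) : ℝ) :=
              mul_le_mul_of_nonneg_left fact_sq_le_odd (by positivity)
          _ = (2*(p+1)*|z|) * (2*(p+1)*z^2)^n * ((Nat.factorial (2*n+1) : ℕ) : ℝ) := by
              rw [e1, habs, pow_succ 2 n, pow_succ (p+1) n]
              ring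
      have hf1 : (0:ℝ) < ((Nat.factorial (2*n+1) : ℕ) : ℝ) := by exact_mod_cast Nat.factorial_pos _
      have hf2 : (0:ℝ) < ((Nat.factorial n : ℕ) : ℝ) := by exact_mod_cast Nat.factorial_pos _
      have lhs_eq : |z|^(2*n+1) / ((Nat.factorial (2*n+1) : ℕ) : ℝ) * (A * gm (p-1))
          = (|z|^(2*n+1) * A * gm (p-1)) / ((Nat.factorial (2*n+1) : ℕ) : ℝ) := by ring
      have rhs_eq : (gm (p-1) * (2*(p+1)*|z|)) * ((2*(p+1)*z^2)^n / ((Nat.factorial n : ℕ) : ℝ))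
          = (gm (p-1) * ((2*(p+1)*|z|) * (2*(p+1)*z^2)^n)) / ((Nat.factorial n : ℕ) : ℝ) := by
          ring
      rw [lhs_eq, rhs_eq, div_le_div_iff₀ hf1 hf2]
      calc |z|^(2*n+1) * A * gm (p-1) * ((Nat.factorial n : ℕ) : ℝ)
          = gm (p-1) * (|z|^(2*n+1) * A * ((Nat.factorial n : ℕ) : ℝ)) := by ring
        _ ≤ gm (p-1) * ((2*(p+1)*|z|) * (2*(p+1)*z^2)^n * ((Nat.factorial (2*n+1) : ℕ) : ℝ)) :=
            mul_le_mul_of_nonneg_left key gm_nonneg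
        _ = gm (p-1) * ((2*(p+1)*|z|) * (2*(p+1)*z^2)^n) * ((Nat.factorial (2*n+1) : ℕ) : ℝ) := by
            ring
    · exact (Real.summable_pow_div_factorial (2*(p+1)*z^2)).mul_left _
  have hHasSum := hasSum_integral_of_summable_integral_norm hintg hsum
  have hptw : (fun ω => ∑' n, F n ω)
      = fun ω => ω ^ p * Real.exp (-(1/2) * ω ^ 2) * Real.cos (ω * z + -(Real.pi/2)) := by
    funext ω
    rw [hF]
    simp only []
    rw [tsum_mul_left, show ω * z + -(Real.pi/2) = ω * z - Real.pi/2 by ring,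
      Real.cos_sub_pi_div_two]
    congr 1
    exact (Real.sin_eq_tsum (ω*z)).symm
  have hFk : ∫ ω, (∑' n, F n ω) ∂μ = Fk p (-(Real.pi/2)) z := by rw [hptw]; rfl
  rw [hFk] at hHasSum
  have hfun : (fun n => ∫ ω, F n ω ∂μ)
      = fun n => ((-1:ℝ)^n * (∏ k ∈ Finset.range (n+1), (p + 2*(k:ℝ))) * z^(2*n+1)
          / ((Nat.factorial (2*n+1) : ℕ) : ℝ)) * gm (p-1) := by
    funext n
    rw [hint n, gm_prod_o hp n]
    ring
  rw [hfun] at hHasSum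
  have hT : HasSum (fun n : ℕ => (-1:ℝ)^n * (∏ k ∈ Finset.range (n+1), (p + 2*(k:ℝ))) * z^(2*n+1)
      / ((Nat.factorial (2*n+1) : ℕ) : ℝ)) (Fk p (-(Real.pi/2)) z / gm (p-1)) := by
    have h2 := hHasSum.div_const (gm (p-1))
    simpa [mul_div_cancel_right₀ _ hgm.ne'] using h2
  rw [LamO, hT.tsum_eq]

/-- angle for each parity -/
noncomputable def cth : Theta → ℝ
  | Theta.e => 0
  | Theta.o => -(Real.pi/2)

/-- normalization for each parity -/
noncomputable def gth (p : ℝ) : Theta → ℝ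
  | Theta.e => gm p
  | Theta.o => gm (p-1)

lemma gth_pos {p : ℝ} (hp : 0 < p) (θ : Theta) : 0 < gth p θ := by
  cases θ
  · exact gm_pos (by linarith)
  · exact gm_pos (by linarith)

lemma lam_eq {p : ℝ} (hp : 0 < p) (θ : Theta) (z : ℝ) :
    Lam θ p z = ((1 / Real.sqrt (2 * Real.pi)) / gth p θ) * Fk p (cth θ) z := by
  cases θ
  · show LamE p z = _
    rw [lamE_eq hp z]
    show _ = 1 / Real.sqrt (2 * Real.pi) / gm p * Fk p 0 z
    ring
  · show LamO p z = _
    rw [lamO_eq hp z]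
    show _ = 1 / Real.sqrt (2 * Real.pi) / gm (p-1) * Fk p (-(Real.pi/2)) z
    ring

lemma lam_abs_le {p : ℝ} (hp : 0 < p) (θ : Theta) (z : ℝ) :
    |Lam θ p z| ≤ ((1 / Real.sqrt (2 * Real.pi)) / gth p θ) * gm p := by
  rw [lam_eq hp θ z, abs_mul]
  have hC : 0 ≤ (1 / Real.sqrt (2 * Real.pi)) / gth p θ := by
    have h1 : 0 < Real.sqrt (2 * Real.pi) := Real.sqrt_pos.2 (by positivity)
    have h2 := gth_pos hp θ
    positivity
  rw [abs_of_nonneg hC]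
  exact mul_le_mul_of_nonneg_left (Fk_abs_le p (cth θ) z (le_of_lt hp)) hC

section Conv

variable {f : ℝ → ℝ}

/-- derivative of the smoothed convolution -/
lemma conv_hasDerivAt (hfc : Continuous f) (hfi : Integrable f) {q c ρ : ℝ} (hq : 0 ≤ q) (hρ : 0 < ρ) (y : ℝ) :
    HasDerivAt (fun y => ∫ t, f t * Fk q c ((y - t) * ρ))
      (ρ * ∫ t, f t * Fk (q+1) (c + Real.pi/2) ((y - t) * ρ)) y := by
  have hint : ∀ (q' c' : ℝ), 0 ≤ q' → ∀ y : ℝ,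
      Integrable (fun t => f t * Fk q' c' ((y - t) * ρ)) := by
    intro q' c' hq' y
    apply Integrable.mono' (hfi.norm.mul_const (gm q'))
    · exact (hfc.mul ((Fk_continuous q' c' hq').comp (by continuity))).aestronglyMeasurable
    · filter_upwards with t
      rw [Real.norm_eq_abs, abs_mul]
      exact mul_le_mul_of_nonneg_left (Fk_abs_le q' c' _ hq') (abs_nonneg _)
  have main := hasDerivAt_integral_of_dominated_loc_of_deriv_le
    (μ := (volume : Measure ℝ)) (𝕜 := ℝ)
    (F := fun y t => f t * Fk q c ((y - t) * ρ))
    (F' := fun y t => f t * (ρ * Fk (q+1) (c + Real.pi/2) ((y - t) * ρ)))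
    (x₀ := y) (s := Metric.ball y 1) (bound := fun t => ‖f t‖ * (ρ * gm (q+1)))
    (Metric.ball_mem_nhds y one_pos) ?_ ?_ ?_ ?_ ?_ ?_
  · have h2 : (∫ t, f t * (ρ * Fk (q+1) (c + Real.pi/2) ((y - t) * ρ)))
        = ρ * ∫ t, f t * Fk (q+1) (c + Real.pi/2) ((y - t) * ρ) := by
      rw [← integral_const_mul]
      congr 1
      funext t
      ring
    rw [← h2]
    exact main.2
  · filter_upwards with x
    exact (hint q c hq x).aestronglyMeasurable
  · exact hint q c hq y
  · apply AEStronglyMeasurable.mul hfi.aestronglyMeasurable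
    exact (continuous_const.mul ((Fk_continuous (q+1) _ (by linarith)).comp (by continuity))).aestronglyMeasurable
  · filter_upwards with t
    intro x _
    rw [Real.norm_eq_abs, abs_mul, abs_mul, abs_of_pos hρ, ← Real.norm_eq_abs (f t)]
    exact mul_le_mul_of_nonneg_left
      (mul_le_mul_of_nonneg_left (Fk_abs_le _ _ _ (by linarith)) hρ.le) (norm_nonneg _)
  · exact (hfi.norm.mul_const _)
  · filter_upwards with t
    intro x _
    have h1 : HasDerivAt (fun y : ℝ => (y - t) * ρ) ρ x := by
      simpa using ((hasDerivAt_id x).sub_const t).mul_const ρ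
    have h2 := (Fk_hasDerivAt q c hq ((x - t) * ρ)).comp x h1
    have h3 := h2.const_mul (f t)
    have h4 : f t * (ρ * Fk (q+1) (c + Real.pi/2) ((x - t) * ρ))
        = f t * (Fk (q+1) (c + Real.pi/2) ((x - t) * ρ) * ρ) := by ring
    rw [h4]
    exact h3

lemma conv_abs_le (hfi : Integrable f) {q c ρ : ℝ} (hq : 0 ≤ q) (y : ℝ) :
    |∫ t, f t * Fk q c ((y - t) * ρ)| ≤ (∫ t, ‖f t‖) * gm q := by
  rw [← Real.norm_eq_abs, ← integral_mul_const]
  apply norm_integral_le_of_norm_le (hfi.norm.mul_const (gm q))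
  filter_upwards with t
  rw [Real.norm_eq_abs, abs_mul, ← Real.norm_eq_abs (f t)]
  exact mul_le_mul_of_nonneg_left (Fk_abs_le q c _ hq) (norm_nonneg _)

lemma conv_iter (hfc : Continuous f) (hfi : Integrable f) {p c ρ : ℝ} (hp : 0 < p) (hρ : 0 < ρ) (a : ℝ) (k : ℕ) :
    iteratedDeriv k (fun y => a * ∫ t, f t * Fk p c ((y - t) * ρ))
      = fun y => (a * ρ^k) * ∫ t, f t * Fk (p + (k:ℝ)) (c + (k:ℝ) * (Real.pi/2)) ((y - t) * ρ) := by
  induction k with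
  | zero => simp
  | succ k ih =>
    rw [iteratedDeriv_succ, ih]
    funext y
    have hq : (0:ℝ) ≤ p + (k:ℝ) := by
      have : (0:ℝ) ≤ (k:ℝ) := Nat.cast_nonneg k
      linarith
    have hd := (conv_hasDerivAt hfc hfi (q := p + (k:ℝ)) (c := c + (k:ℝ) * (Real.pi/2)) hq hρ y)
    have hd2 := (hd.const_mul (a * ρ^k)).deriv
    rw [hd2]
    have e1 : p + ((k:ℕ)+1 : ℕ) = (p + (k:ℝ)) + 1 := by push_cast; ring
    have e2 : c + (((k:ℕ)+1 : ℕ) : ℝ) * (Real.pi/2) = (c + (k:ℝ) * (Real.pi/2)) + Real.pi/2 := by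
      push_cast; ring
    rw [e1, e2, pow_succ]
    ring

end Conv


/-- Theorem 2.4: uniform convergence of `φ_p^θ(·,ρ)` and its `x`-derivatives to zero
as `ρ → 0⁺`. -/
theorem stmt10 (m : ℕ) (hm : 0 < m) (p : ℝ) (hp : 0 < p) (hmp : p + 1 < (m : ℝ))
    (f : ℝ → ℝ) (hf : HypH m f)
    (hxf : MeasureTheory.Integrable (fun x : ℝ => x * f x)) (θ : Theta) :
    TendstoUniformly (fun ρ : ℝ => fun x : ℝ => phi f θ p x ρ)
      (fun _ => 0) (nhdsWithin 0 (Set.Ioi (0 : ℝ))) ∧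
    ∀ k : ℕ, 0 < k → (k : ℝ) < (m : ℝ) - p - 1 →
      TendstoUniformly
        (fun ρ : ℝ => fun x : ℝ => iteratedDeriv k (fun y => phi f θ p y ρ) x)
        (fun _ => 0) (nhdsWithin 0 (Set.Ioi (0 : ℝ))) := by
  have hfc : Continuous f := hf.1.continuous
  have hfi : Integrable f := by
    have h := hf.2 0 (Nat.zero_le m)
    rwa [iteratedDeriv_zero] at h
  set C : ℝ := (1 / Real.sqrt (2 * Real.pi)) / gth p θ with hC
  have hCpos : 0 < C := by
    have h1 : 0 < Real.sqrt (2 * Real.pi) := Real.sqrt_pos.2 (by positivity)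
    have h2 := gth_pos hp θ
    positivity
  set If : ℝ := ∫ t, ‖f t‖ with hIf
  have hIf0 : 0 ≤ If := integral_nonneg (fun t => norm_nonneg _)
  have conv_eq : ∀ ρ : ℝ, 0 < ρ → ∀ y : ℝ,
      phi f θ p y ρ = (ρ ^ (p+1) * C) * ∫ t, f t * Fk p (cth θ) ((y - t) * ρ) := by
    intro ρ hρ y
    have step1 : phi f θ p y ρ
        = ∫ ν, (fun t => f t * ρ ^ (p+1) * Lam θ p ((y - t) * ρ)) (y - ν) := by
      show (∫ ν, f (y - ν) * ρ ^ (p+1) * Lam θ p (ν * ρ)) = _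
      congr 1
      funext ν
      simp [sub_sub_cancel]
    rw [step1, integral_sub_left_eq_self
      (fun t => f t * ρ ^ (p+1) * Lam θ p ((y - t) * ρ)) volume y, ← integral_const_mul]
    congr 1
    funext t
    show f t * ρ ^ (p+1) * Lam θ p ((y - t) * ρ)
      = ρ ^ (p+1) * C * (f t * Fk p (cth θ) ((y - t) * ρ))
    rw [lam_eq hp θ]
    ring
  have hrpow : Tendsto (fun ρ : ℝ => ρ ^ (p+1)) (nhdsWithin 0 (Set.Ioi 0)) (nhds 0) := by
    have h1 : ContinuousAt (fun ρ : ℝ => ρ ^ (p+1)) 0 :=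
      Real.continuousAt_rpow_const 0 (p+1) (Or.inr (by linarith))
    have h2 := h1.tendsto
    rw [Real.zero_rpow (by linarith : p + 1 ≠ 0)] at h2
    exact h2.mono_left nhdsWithin_le_nhds
  constructor
  · rw [Metric.tendstoUniformly_iff]
    intro ε hε
    have hT : Tendsto (fun ρ : ℝ => ρ ^ (p+1) * (C * If * gm p))
        (nhdsWithin 0 (Set.Ioi 0)) (nhds 0) := by
      simpa using hrpow.mul_const (C * If * gm p)
    filter_upwards [hT.eventually (gt_mem_nhds hε), self_mem_nhdsWithin] with ρ h1 h2
    intro x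
    rw [dist_zero_left, conv_eq ρ h2 x]
    refine lt_of_le_of_lt ?_ h1
    have hb := conv_abs_le hfi (q := p) (c := cth θ) (ρ := ρ) hp.le x
    have ha : 0 ≤ ρ ^ (p+1) * C := mul_nonneg (Real.rpow_nonneg h2.le _) hCpos.le
    rw [Real.norm_eq_abs, abs_mul, abs_of_nonneg ha]
    exact le_trans (mul_le_mul_of_nonneg_left hb ha) (le_of_eq (by ring))
  · intro k hk0 hkm
    rw [Metric.tendstoUniformly_iff]
    intro ε hε
    have hqk : (0:ℝ) ≤ p + (k:ℝ) := by
      have : (0:ℝ) ≤ (k:ℝ) := Nat.cast_nonneg k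
      linarith
    have hpw : Tendsto (fun ρ : ℝ => ρ ^ k) (nhdsWithin 0 (Set.Ioi 0)) (nhds 0) := by
      have h1 := (continuous_pow k).tendsto (0:ℝ)
      rw [zero_pow hk0.ne'] at h1
      exact h1.mono_left nhdsWithin_le_nhds
    have hT : Tendsto (fun ρ : ℝ => ρ ^ (p+1) * ρ ^ k * (C * If * gm (p + (k:ℝ))))
        (nhdsWithin 0 (Set.Ioi 0)) (nhds 0) := by
      simpa using (hrpow.mul hpw).mul_const (C * If * gm (p + (k:ℝ)))
    filter_upwards [hT.eventually (gt_mem_nhds hε), self_mem_nhdsWithin] with ρ h1 h2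
    intro x
    have heq : (fun y => phi f θ p y ρ)
        = fun y => (ρ ^ (p+1) * C) * ∫ t, f t * Fk p (cth θ) ((y - t) * ρ) :=
      funext (conv_eq ρ h2)
    rw [dist_zero_left, heq, conv_iter hfc hfi hp h2 (ρ ^ (p+1) * C) k]
    refine lt_of_le_of_lt ?_ h1
    have hb := conv_abs_le hfi (q := p + (k:ℝ))
      (c := cth θ + (k:ℝ) * (Real.pi/2)) (ρ := ρ) hqk x
    have ha : 0 ≤ ρ ^ (p+1) * C * ρ ^ k := by
      have h3 : (0:ℝ) ≤ ρ ^ (p+1) := Real.rpow_nonneg h2.le _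
      exact mul_nonneg (mul_nonneg h3 hCpos.le) (pow_nonneg h2.le k)
    show ‖(ρ ^ (p+1) * C * ρ ^ k) *
        ∫ t, f t * Fk (p + (k:ℝ)) (cth θ + (k:ℝ) * (Real.pi/2)) ((x - t) * ρ)‖
      ≤ ρ ^ (p+1) * ρ ^ k * (C * If * gm (p + (k:ℝ)))
    rw [Real.norm_eq_abs, abs_mul, abs_of_nonneg ha]
    exact le_trans (mul_le_mul_of_nonneg_left hb ha) (le_of_eq (by ring))
end

section
/- Let Ψ: ℝ² → ℝ be three times continuously differentiable and satisfy the equation ∂Ψ/∂σ (x,σ) = σ · ∂²Ψ/∂x² (x,σ) for all (x,σ) ∈ ℝ². Define L(x,σ) = Ψ(x,σ) - x·∂Ψ/∂x(x,σ), and let z: (a,b) → ℝ², z(t) = (x(t), σ(t)), be a differentiable curve satisfying x'(t) = -∂²Ψ/∂x∂σ (z(t)) and σ'(t) = ∂²Ψ/∂x² (z(t)) for all t. Then d/dt [L(z(t))] = σ(t) · (∂²Ψ/∂x² (z(t)))² for all t; consequently t ↦ L(z(t)) is non-decreasing on any subinterval where σ(t) ≥ 0 and non-increasing on any subinterval where σ(t)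 ≤ 0. -/
open MeasureTheory Filter

/-- Lemma 3.2: the energy function `L = Ψ - x·Ψ_x` is monotone along trajectories of the
vector field `(-Ψ_xσ, Ψ_xx)`. -/
theorem stmt17 (Ψ : ℝ → ℝ → ℝ)
    (hΨ : ContDiff ℝ 3 (fun q : ℝ × ℝ => Ψ q.1 q.2))
    (heat : ∀ x σ : ℝ, deriv (fun s => Ψ x s) σ = σ * iteratedDeriv 2 (fun y => Ψ y σ) x)
    (L : ℝ → ℝ → ℝ) (hL : ∀ x σ : ℝ, L x σ = Ψ x σ - x * deriv (fun y => Ψ y σ) x)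
    (a b : ℝ) (z : ℝ → ℝ × ℝ)
    (hz : ∀ t ∈ Set.Ioo a b,
      HasDerivAt (fun t => (z t).1)
        (-(deriv (fun s => deriv (fun y => Ψ y s) (z t).1) (z t).2)) t ∧
      HasDerivAt (fun t => (z t).2)
        (iteratedDeriv 2 (fun y => Ψ y (z t).2) (z t).1) t) :
    (∀ t ∈ Set.Ioo a b,
      HasDerivAt (fun t => L (z t).1 (z t).2)
        ((z t).2 * (iteratedDeriv 2 (fun y => Ψ y (z t).2) (z t).1) ^ 2) t) ∧
    (∀ t₁ ∈ Set.Ioo a b, ∀ t₂ ∈ Set.Ioo a b, t₁ ≤ t₂ →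
      (∀ t ∈ Set.Icc t₁ t₂, 0 ≤ (z t).2) → L (z t₁).1 (z t₁).2 ≤ L (z t₂).1 (z t₂).2) ∧
    (∀ t₁ ∈ Set.Ioo a b, ∀ t₂ ∈ Set.Ioo a b, t₁ ≤ t₂ →
      (∀ t ∈ Set.Icc t₁ t₂, (z t).2 ≤ 0) → L (z t₂).1 (z t₂).2 ≤ L (z t₁).1 (z t₁).2) := by
  classical
  set F : ℝ × ℝ → ℝ := fun q => Ψ q.1 q.2 with hFdef
  have hFd : Differentiable ℝ F := hΨ.differentiable (by norm_num)
  set G : ℝ × ℝ → ℝ := fun q => fderiv ℝ F q (1, 0) with hGdef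
  have hGc : ContDiff ℝ 2 G := (hΨ.fderiv_right (by norm_num)).clm_apply contDiff_const
  have hGd : Differentiable ℝ G := hGc.differentiable (by norm_num)
  -- partial derivative in x of Ψ is G
  have hA : ∀ x σ : ℝ, HasDerivAt (fun y => Ψ y σ) (G (x, σ)) x := by
    intro x σ
    have h1 : HasDerivAt (fun y : ℝ => (y, σ)) ((1 : ℝ), (0 : ℝ)) x :=
      (hasDerivAt_id x).prodMk (hasDerivAt_const x σ)
    exact (hFd (x, σ)).hasFDerivAt.comp_hasDerivAt x h1
  have hA' : ∀ σ : ℝ, deriv (fun y => Ψ y σ) = fun x => G (x, σ) :=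
    fun σ => funext fun x => (hA x σ).deriv
  have hB : ∀ x σ : ℝ, HasDerivAt (fun y => G (y, σ)) (fderiv ℝ G (x, σ) (1, 0)) x := by
    intro x σ
    have h1 : HasDerivAt (fun y : ℝ => (y, σ)) ((1 : ℝ), (0 : ℝ)) x :=
      (hasDerivAt_id x).prodMk (hasDerivAt_const x σ)
    exact (hGd (x, σ)).hasFDerivAt.comp_hasDerivAt x h1
  have hC : ∀ x σ : ℝ, HasDerivAt (fun s => G (x, s)) (fderiv ℝ G (x, σ) (0, 1)) σ := by
    intro x σ
    have h1 : HasDerivAt (fun s : ℝ => (x, s)) ((0 : ℝ), (1 : ℝ)) σ :=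
      (hasDerivAt_const σ x).prodMk (hasDerivAt_id σ)
    exact (hGd (x, σ)).hasFDerivAt.comp_hasDerivAt σ h1
  have hD : ∀ x σ : ℝ, HasDerivAt (fun s => Ψ x s) (fderiv ℝ F (x, σ) (0, 1)) σ := by
    intro x σ
    have h1 : HasDerivAt (fun s : ℝ => (x, s)) ((0 : ℝ), (1 : ℝ)) σ :=
      (hasDerivAt_const σ x).prodMk (hasDerivAt_id σ)
    exact (hFd (x, σ)).hasFDerivAt.comp_hasDerivAt σ h1
  -- second partial derivative in x
  have hXX : ∀ p : ℝ × ℝ, iteratedDeriv 2 (fun y => Ψ y p.2) p.1 = fderiv ℝ G p (1, 0) := by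
    rintro ⟨x, σ⟩
    show iteratedDeriv 2 (fun y => Ψ y σ) x = fderiv ℝ G (x, σ) (1, 0)
    rw [iteratedDeriv_succ, iteratedDeriv_one, hA' σ]
    exact (hB x σ).deriv
  -- heat equation in fderiv form
  have hHeat : ∀ p : ℝ × ℝ, fderiv ℝ F p (0, 1) = p.2 * fderiv ℝ G p (1, 0) := by
    rintro ⟨x, σ⟩
    show fderiv ℝ F (x, σ) (0, 1) = σ * fderiv ℝ G (x, σ) (1, 0)
    rw [← (hD x σ).deriv, heat x σ]
    exact congrArg (fun r => σ * r) (hXX (x, σ))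
  -- mixed partial
  have hMixed : ∀ p : ℝ × ℝ,
      deriv (fun s => deriv (fun y => Ψ y s) p.1) p.2 = fderiv ℝ G p (0, 1) := by
    rintro ⟨x, σ⟩
    show deriv (fun s => deriv (fun y => Ψ y s) x) σ = fderiv ℝ G (x, σ) (0, 1)
    have h1 : (fun s => deriv (fun y => Ψ y s) x) = fun s => G (x, s) :=
      funext fun s => (hA x s).deriv
    rw [h1]
    exact (hC x σ).deriv
  -- L in terms of F and G
  have hLp : (fun t => L (z t).1 (z t).2) = fun t => F (z t) - (z t).1 * G (z t) := by
    funext t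
    rw [hL, (hA (z t).1 (z t).2).deriv]
  -- directional expansion of linear maps
  have hlin : ∀ (φ : ℝ × ℝ →L[ℝ] ℝ) (u v : ℝ), φ (u, v) = u * φ (1, 0) + v * φ (0, 1) := by
    intro φ u v
    have h : ((u, v) : ℝ × ℝ) = u • ((1 : ℝ), (0 : ℝ)) + v • ((0 : ℝ), (1 : ℝ)) := by
      simp [Prod.ext_iff]
    rw [h, map_add, φ.map_smul, φ.map_smul, smul_eq_mul, smul_eq_mul]
  -- main derivative computation
  have part1 : ∀ t ∈ Set.Ioo a b,
      HasDerivAt (fun t => L (z t).1 (z t).2)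
        ((z t).2 * (iteratedDeriv 2 (fun y => Ψ y (z t).2) (z t).1) ^ 2) t := by
    intro t ht
    obtain ⟨hx, hσ⟩ := hz t ht
    have hx' : HasDerivAt (fun t => (z t).1) (-(fderiv ℝ G (z t) (0, 1))) t := by
      rw [hMixed (z t)] at hx; exact hx
    have hσ' : HasDerivAt (fun t => (z t).2) (fderiv ℝ G (z t) (1, 0)) t := by
      rw [hXX (z t)] at hσ; exact hσ
    have hzt : HasDerivAt z (-(fderiv ℝ G (z t) (0, 1)), fderiv ℝ G (z t) (1, 0)) t :=
      hx'.prodMk hσ'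
    have hFz : HasDerivAt (fun u => F (z u))
        (fderiv ℝ F (z t) (-(fderiv ℝ G (z t) (0, 1)), fderiv ℝ G (z t) (1, 0))) t :=
      (hFd (z t)).hasFDerivAt.comp_hasDerivAt t hzt
    have hGz : HasDerivAt (fun u => G (z u))
        (fderiv ℝ G (z t) (-(fderiv ℝ G (z t) (0, 1)), fderiv ℝ G (z t) (1, 0))) t :=
      (hGd (z t)).hasFDerivAt.comp_hasDerivAt t hzt
    have hGz0 : HasDerivAt (fun u => G (z u)) 0 t := by
      convert hGz using 1
      rw [hlin]
      ring
    have hxG : HasDerivAt (fun u => (z u).1 * G (z u))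
        ((-(fderiv ℝ G (z t) (0, 1))) * G (z t) + (z t).1 * 0) t := hx'.mul hGz0
    have hfinal := hFz.sub hxG
    rw [hLp]
    convert hfinal using 1
    case e'_4 => rfl
    case e'_5 => rfl
    case e'_8 => rfl
    rw [hXX (z t),
      hlin (fderiv ℝ F (z t)) (-(fderiv ℝ G (z t) (0, 1))) (fderiv ℝ G (z t) (1, 0)),
      hHeat (z t)]
    have hG1 : fderiv ℝ F (z t) (1, 0) = G (z t) := rfl
    rw [hG1]
    ring
  refine ⟨part1, ?_, ?_⟩
  · intro t₁ ht₁ t₂ ht₂ h12 hσpos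
    have hsub : Set.Icc t₁ t₂ ⊆ Set.Ioo a b := fun t ht =>
      ⟨lt_of_lt_of_le ht₁.1 ht.1, lt_of_le_of_lt ht.2 ht₂.2⟩
    have hmono := monotoneOn_of_deriv_nonneg (convex_Icc t₁ t₂)
      (fun t ht => (part1 t (hsub ht)).continuousAt.continuousWithinAt)
      (fun t ht =>
        (part1 t (hsub (interior_subset ht))).differentiableAt.differentiableWithinAt)
      (fun t ht => by
        rw [(part1 t (hsub (interior_subset ht))).deriv]
        exact mul_nonneg (hσpos t (interior_subset ht)) (sq_nonneg _))
    exact hmono (Set.left_mem_Icc.2 h12) (Set.right_mem_Icc.2 h12) h12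
  · intro t₁ ht₁ t₂ ht₂ h12 hσneg
    have hsub : Set.Icc t₁ t₂ ⊆ Set.Ioo a b := fun t ht =>
      ⟨lt_of_lt_of_le ht₁.1 ht.1, lt_of_le_of_lt ht.2 ht₂.2⟩
    have hmono := antitoneOn_of_deriv_nonpos (convex_Icc t₁ t₂)
      (fun t ht => (part1 t (hsub ht)).continuousAt.continuousWithinAt)
      (fun t ht =>
        (part1 t (hsub (interior_subset ht))).differentiableAt.differentiableWithinAt)
      (fun t ht => by
        rw [(part1 t (hsub (interior_subset ht))).deriv]
        exact mul_nonpos_of_nonpos_of_nonneg (hσneg t (interior_subset ht)) (sq_nonneg _))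
    exact hmono (Set.left_mem_Icc.2 h12) (Set.right_mem_Icc.2 h12) h12
end

section
/- Let l ≥ 1 and m be positive integers, p > 0 with m > p + 1 + 2l, let f: ℝ → ℝ satisfy hypothesis H(m) with x ↦ x·f(x) absolutely integrable, and let θ ∈ {e,o}. Then for all integers k, n ≥ 0 with 2n + k ≤ 2l, the mixed partial derivative ∂^{k+n}Ψ_p^θ/∂x^k∂σ^n is uniformly bounded on the plane: there exists D > 0 such that |∂^{k+n}Ψ_p^θ/∂x^k∂σ^n (x,σ)| ≤ D for all (x,σ) ∈ ℝ². -/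
open MeasureTheory Filter

/-! ### Auxiliary lemmas -/

noncomputable def gss : ℝ → ℝ := fun t => Real.exp (-(t ^ 2 / 2))
noncomputable def qd (n : ℕ) : ℝ → ℝ := iteratedDeriv n gss

lemma gss_contDiff : ContDiff ℝ ((⊤ : ℕ∞) : WithTop ℕ∞) gss :=
  (((contDiff_id.pow 2).div_const 2).neg).exp

lemma qd_contDiff (n : ℕ) : ContDiff ℝ ((⊤ : ℕ∞) : WithTop ℕ∞) (qd n) := by
  rw [qd, iteratedDeriv_eq_iterate]
  exact ContDiff.iterate_deriv n gss_contDiff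

lemma qd_continuous (n : ℕ) : Continuous (qd n) := (qd_contDiff n).continuous

lemma qd_hasDerivAt (n : ℕ) (t : ℝ) : HasDerivAt (qd n) (qd (n + 1) t) t := by
  have hd : Differentiable ℝ (qd n) := (qd_contDiff n).differentiable (by simp)
  have h : qd (n + 1) = deriv (qd n) := by simp [qd, iteratedDeriv_succ]
  rw [h]
  exact (hd t).hasDerivAt

lemma pow_mul_gss_le (i : ℕ) (t : ℝ) :
    |t| ^ i * Real.exp (-(t ^ 2 / 2)) ≤ 1 + 2 ^ i * (Nat.factorial i : ℝ) := by
  have hfac : (0:ℝ) ≤ 2 ^ i * (Nat.factorial i : ℝ) := by positivity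
  rcases le_or_gt (|t|) 1 with h | h
  · have h1 : |t| ^ i ≤ 1 := pow_le_one₀ (abs_nonneg t) h
    have h2 : Real.exp (-(t ^ 2 / 2)) ≤ 1 := Real.exp_le_one_iff.2 (neg_nonpos.2 (by positivity))
    nlinarith [pow_nonneg (abs_nonneg t) i, Real.exp_pos (-(t ^ 2 / 2))]
  · have hexp : (t ^ 2 / 2) ^ i / (Nat.factorial i : ℝ) ≤ Real.exp (t ^ 2 / 2) := by
      refine le_trans ?_ (Real.sum_le_exp_of_nonneg (by positivity) (i + 1))
      exact Finset.single_le_sum (f := fun j => (t ^ 2 / 2) ^ j / (Nat.factorial j : ℝ))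
        (fun j _ => by positivity) (Finset.self_mem_range_succ i)
    have hthis : (t ^ 2 / 2) ^ i ≤ (Nat.factorial i : ℝ) * Real.exp (t ^ 2 / 2) := by
      rw [div_le_iff₀ (by positivity : (0:ℝ) < (Nat.factorial i : ℝ))] at hexp
      linarith
    have h2 : (t ^ 2) ^ i ≤ 2 ^ i * (Nat.factorial i : ℝ) * Real.exp (t ^ 2 / 2) := by
      have he : (t ^ 2) ^ i = 2 ^ i * (t ^ 2 / 2) ^ i := by
        rw [div_pow]; field_simp
      rw [he, mul_assoc]
      exact mul_le_mul_of_nonneg_left hthis (by positivity)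
    have h1 : |t| ^ i ≤ (t ^ 2) ^ i := by
      apply pow_le_pow_left₀ (abs_nonneg t)
      nlinarith [abs_nonneg t, sq_abs t]
    calc |t| ^ i * Real.exp (-(t ^ 2 / 2)) ≤ (t ^ 2) ^ i * Real.exp (-(t ^ 2 / 2)) :=
          mul_le_mul_of_nonneg_right h1 (Real.exp_pos _).le
      _ ≤ 2 ^ i * (Nat.factorial i : ℝ) * Real.exp (t ^ 2 / 2) * Real.exp (-(t ^ 2 / 2)) :=
          mul_le_mul_of_nonneg_right h2 (Real.exp_pos _).le
      _ = 2 ^ i * (Nat.factorial i : ℝ) := by rw [mul_assoc, ← Real.exp_add]; simp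
      _ ≤ 1 + 2 ^ i * (Nat.factorial i : ℝ) := by linarith

lemma qd_bound (n : ℕ) : ∃ C : ℝ, 0 < C ∧ ∀ t, |qd n t| ≤ C := by
  set P : Polynomial ℤ := Polynomial.hermite n with hP
  refine ⟨∑ i ∈ Finset.range (n + 1),
    |(P.coeff i : ℝ)| * (1 + 2 ^ i * (Nat.factorial i : ℝ)) + 1, by positivity, fun t => ?_⟩
  have hq : qd n t = (-1 : ℝ) ^ n * (Polynomial.aeval t (Polynomial.hermite n)) *
      Real.exp (-(t ^ 2 / 2)) := by
    rw [qd, iteratedDeriv_eq_iterate]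
    exact Polynomial.deriv_gaussian_eq_hermite_mul_gaussian n t
  have habs : |qd n t| = |(Polynomial.aeval t (Polynomial.hermite n))| *
      Real.exp (-(t ^ 2 / 2)) := by
    rw [hq, abs_mul, abs_mul, abs_pow, abs_neg, abs_one, one_pow, one_mul,
      abs_of_pos (Real.exp_pos _)]
  rw [habs]
  have heval : (Polynomial.aeval t (Polynomial.hermite n)) =
      ∑ i ∈ Finset.range (n + 1), (P.coeff i : ℝ) * t ^ i := by
    rw [Polynomial.aeval_def, Polynomial.eval₂_eq_sum_range]
    simp [hP, Polynomial.natDegree_hermite]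
  rw [heval]
  calc |∑ i ∈ Finset.range (n + 1), (P.coeff i : ℝ) * t ^ i| * Real.exp (-(t ^ 2 / 2))
      ≤ (∑ i ∈ Finset.range (n + 1), |(P.coeff i : ℝ)| * |t| ^ i) *
        Real.exp (-(t ^ 2 / 2)) := by
        refine mul_le_mul_of_nonneg_right ?_ (Real.exp_pos _).le
        refine le_trans (Finset.abs_sum_le_sum_abs _ _) ?_
        refine Finset.sum_le_sum fun i _ => ?_
        rw [abs_mul, abs_pow]
    _ = ∑ i ∈ Finset.range (n + 1),
        |(P.coeff i : ℝ)| * (|t| ^ i * Real.exp (-(t ^ 2 / 2))) := by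
        rw [Finset.sum_mul]; congr 1; funext i; ring
    _ ≤ ∑ i ∈ Finset.range (n + 1),
        |(P.coeff i : ℝ)| * (1 + 2 ^ i * (Nat.factorial i : ℝ)) := by
        refine Finset.sum_le_sum fun i _ => ?_
        exact mul_le_mul_of_nonneg_left (pow_mul_gss_le i t) (abs_nonneg _)
    _ ≤ _ := by linarith

lemma FT_eq_fourierIntegral (g : ℝ → ℝ) (ω : ℝ) :
    FT g ω = FourierTransform.fourier (fun x => (g x : ℂ)) (ω / (2 * Real.pi)) := by
  have hπ : (Real.pi : ℂ) ≠ 0 := by exact_mod_cast Real.pi_ne_zero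
  rw [Real.fourier_eq']
  unfold FT
  congr 1
  funext x
  rw [smul_eq_mul, mul_comm]
  congr 2
  have h : (inner ℝ x (ω / (2 * Real.pi)) : ℝ) = x * (ω / (2 * Real.pi)) := by
      simp [mul_comm]
  rw [h]
  push_cast
  field_simp

lemma FT_continuous (g : ℝ → ℝ) (hg : Integrable g) : Continuous (FT g) := by
  have h : Continuous (FourierTransform.fourier (fun x => (g x : ℂ)) : ℝ → ℂ) :=
    VectorFourier.fourierIntegral_continuous Real.continuous_fourierChar
      (innerSL ℝ).continuous₂
      hg.ofReal
  have hc : Continuous fun ω : ℝ => ω / (2 * Real.pi) := continuous_id.div_const _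
  rw [funext fun ω => FT_eq_fourierIntegral g ω]
  exact h.comp hc

lemma norm_FT_le (g : ℝ → ℝ) (ω : ℝ) : ‖FT g ω‖ ≤ ∫ x, |g x| := by
  refine le_trans (norm_integral_le_integral_norm _) (le_of_eq ?_)
  congr 1
  funext x
  rw [norm_mul, Complex.norm_real]
  have h : ‖Complex.exp (-(Complex.I * ω * x))‖ = 1 := by
    rw [Complex.norm_exp]
    simp
  rw [h, mul_one]
  rfl

lemma iteratedDeriv_ofReal (f : ℝ → ℝ) (m : ℕ) (hf : ContDiff ℝ m f) :
    ∀ n, n ≤ m → iteratedDeriv n (fun x => (f x : ℂ)) =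
      fun x => ((iteratedDeriv n f x : ℝ) : ℂ) := by
  intro n hn
  induction n with
  | zero => simp
  | succ k ih =>
    rw [iteratedDeriv_succ, iteratedDeriv_succ, ih (le_of_lt (Nat.lt_of_succ_le hn))]
    funext x
    have hd : DifferentiableAt ℝ (iteratedDeriv k f) x := by
      have hk : (k : WithTop ℕ∞) < m := by exact_mod_cast Nat.lt_of_succ_le hn
      exact (hf.differentiable_iteratedDeriv k hk) x
    exact (hd.hasDerivAt.ofReal_comp).deriv

lemma FT_iteratedDeriv (f : ℝ → ℝ) (m : ℕ) (hf : ContDiff ℝ m f)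
    (hi : ∀ i : ℕ, i ≤ m → Integrable (iteratedDeriv i f)) (ω : ℝ) :
    FT (iteratedDeriv m f) ω = (Complex.I * ω) ^ m * FT f ω := by
  have hπ : (Real.pi : ℂ) ≠ 0 := by exact_mod_cast Real.pi_ne_zero
  have hcd : ContDiff ℝ ((m : ℕ∞) : WithTop ℕ∞) (fun x => (f x : ℂ)) := by
    exact Complex.ofRealCLM.contDiff.comp (by exact_mod_cast hf)
  have hint : ∀ n : ℕ, (n : ℕ∞) ≤ (m : ℕ∞) →
      Integrable (iteratedDeriv n (fun x => (f x : ℂ))) := by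
    intro n hn
    have hn' : n ≤ m := by exact_mod_cast hn
    rw [iteratedDeriv_ofReal f m hf n hn']
    exact (hi n hn').ofReal
  have key := Real.fourier_iteratedDeriv (N := (m : ℕ∞)) hcd hint le_rfl
  have h1 : FT (iteratedDeriv m f) ω =
      FourierTransform.fourier (iteratedDeriv m (fun x => (f x : ℂ))) (ω / (2 * Real.pi)) := by
    rw [FT_eq_fourierIntegral, iteratedDeriv_ofReal f m hf m le_rfl]
  rw [h1, key, FT_eq_fourierIntegral]
  simp only [smul_eq_mul]
  congr 1
  push_cast
  field_simp

noncomputable def FF (A : ℝ → ℂ) (k n : ℕ) (x σ : ℝ) (ω : ℝ) : ℂ :=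
  A ω * ((Complex.I * ω) ^ k * Complex.exp (Complex.I * ω * x) * (ω : ℂ) ^ n *
    ((qd n (ω * σ) : ℝ) : ℂ))

noncomputable def HH (A : ℝ → ℂ) (k n : ℕ) (x σ : ℝ) : ℂ := ∫ ω : ℝ, FF A k n x σ ω

lemma FF_meas (A : ℝ → ℂ) (hA : AEStronglyMeasurable A (volume : Measure ℝ))
    (k n : ℕ) (x σ : ℝ) : AEStronglyMeasurable (FF A k n x σ) (volume : Measure ℝ) := by
  have c0 : Continuous fun ω : ℝ => (ω : ℂ) := Complex.continuous_ofReal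
  have c1 : Continuous fun ω : ℝ => (Complex.I * ω) ^ k := (continuous_const.mul c0).pow k
  have c2 : Continuous fun ω : ℝ => Complex.exp (Complex.I * ω * x) :=
    Complex.continuous_exp.comp ((continuous_const.mul c0).mul continuous_const)
  have c3 : Continuous fun ω : ℝ => (ω : ℂ) ^ n := c0.pow n
  have c4 : Continuous fun ω : ℝ => ((qd n (ω * σ) : ℝ) : ℂ) :=
    Complex.continuous_ofReal.comp ((qd_continuous n).comp (continuous_id.mul continuous_const))
  exact hA.mul (((c1.mul c2).mul c3).mul c4).aestronglyMeasurable

lemma norm_cexp_I_mul (ω x : ℝ) : ‖Complex.exp (Complex.I * ω * x)‖ = 1 := by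
  rw [Complex.norm_exp]
  simp

lemma FF_norm_le (A : ℝ → ℂ) (k n : ℕ) (x σ ω : ℝ) {C : ℝ} (hC : ∀ t, |qd n t| ≤ C) :
    ‖FF A k n x σ ω‖ ≤ ‖A ω‖ * |ω| ^ (k + n) * C := by
  have h0 : (0:ℝ) ≤ C := le_trans (abs_nonneg _) (hC 0)
  rw [FF, norm_mul, norm_mul, norm_mul, norm_mul, norm_pow, norm_pow, norm_mul,
    Complex.norm_I, Complex.norm_real, Complex.norm_real,
    norm_cexp_I_mul, Real.norm_eq_abs, Real.norm_eq_abs, one_mul, mul_one, pow_add]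
  calc ‖A ω‖ * (|ω| ^ k * |ω| ^ n * |qd n (ω * σ)|)
      ≤ ‖A ω‖ * (|ω| ^ k * |ω| ^ n * C) := by
        refine mul_le_mul_of_nonneg_left ?_ (norm_nonneg _)
        exact mul_le_mul_of_nonneg_left (hC _) (by positivity)
    _ = ‖A ω‖ * (|ω| ^ k * |ω| ^ n) * C := by ring

lemma FF_integrable (A : ℝ → ℂ) (hA : AEStronglyMeasurable A (volume : Measure ℝ))
    (k n : ℕ) (x σ : ℝ)
    (hW : Integrable (fun ω : ℝ => ‖A ω‖ * |ω| ^ (k + n))) :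
    Integrable (FF A k n x σ) := by
  obtain ⟨C, hC0, hC⟩ := qd_bound n
  refine (hW.mul_const C).mono' (FF_meas A hA k n x σ) (ae_of_all _ fun ω => ?_)
  exact FF_norm_le A k n x σ ω hC

lemma FF_hasDerivAt_x (A : ℝ → ℂ) (k n : ℕ) (x σ ω : ℝ) :
    HasDerivAt (fun y => FF A k n y σ ω) (FF A (k + 1) n x σ ω) x := by
  have hC : HasDerivAt (fun w : ℂ => Complex.exp (Complex.I * ω * w))
      (Complex.exp (Complex.I * ω * x) * (Complex.I * ω)) (x : ℂ) := by
    simpa using ((hasDerivAt_id (x : ℂ)).const_mul (Complex.I * (ω:ℂ))).cexp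
  have hexp : HasDerivAt (fun y : ℝ => Complex.exp (Complex.I * ω * y))
      (Complex.exp (Complex.I * ω * x) * (Complex.I * ω)) x := hC.comp_ofReal
  have h5 := (((hexp.const_mul ((Complex.I * (ω:ℂ)) ^ k)).mul_const ((ω : ℂ) ^ n)).mul_const
      ((qd n (ω * σ) : ℝ) : ℂ)).const_mul (A ω)
  refine h5.congr_deriv ?_
  rw [FF]
  ring

lemma FF_hasDerivAt_sigma (A : ℝ → ℂ) (k n : ℕ) (x σ ω : ℝ) :
    HasDerivAt (fun s => FF A k n x s ω) (FF A k (n + 1) x σ ω) σ := by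
  have hmul : HasDerivAt (fun s : ℝ => ω * s) ω σ := by
    simpa using (hasDerivAt_id σ).const_mul ω
  have hq : HasDerivAt (fun s : ℝ => qd n (ω * s)) (qd (n + 1) (ω * σ) * ω) σ :=
    (qd_hasDerivAt n (ω * σ)).comp σ hmul
  have hqC : HasDerivAt (fun s : ℝ => ((qd n (ω * s) : ℝ) : ℂ))
      ((qd (n + 1) (ω * σ) * ω : ℝ) : ℂ) σ := hq.ofReal_comp
  have h5 := (hqC.const_mul
      ((Complex.I * (ω:ℂ)) ^ k * Complex.exp (Complex.I * ω * x) * (ω : ℂ) ^ n)).const_mul (A ω)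
  refine h5.congr_deriv ?_
  rw [FF]
  push_cast
  ring

lemma HH_hasDerivAt_x (A : ℝ → ℂ) (hA : AEStronglyMeasurable A (volume : Measure ℝ))
    (k n : ℕ) (x σ : ℝ)
    (h1 : Integrable (fun ω : ℝ => ‖A ω‖ * |ω| ^ (k + n)))
    (h2 : Integrable (fun ω : ℝ => ‖A ω‖ * |ω| ^ (k + 1 + n))) :
    HasDerivAt (fun y => HH A k n y σ) (HH A (k + 1) n x σ) x := by
  obtain ⟨C, hC0, hC⟩ := qd_bound n
  refine (hasDerivAt_integral_of_dominated_loc_of_deriv_le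
    (F := fun y ω => FF A k n y σ ω) (F' := fun y ω => FF A (k + 1) n y σ ω)
    (bound := fun ω => ‖A ω‖ * |ω| ^ (k + 1 + n) * C) (Metric.ball_mem_nhds x one_pos)
    (Eventually.of_forall fun y => FF_meas A hA k n y σ)
    (FF_integrable A hA k n x σ h1)
    (FF_meas A hA (k + 1) n x σ)
    (ae_of_all _ fun ω y _ => FF_norm_le A (k + 1) n y σ ω hC)
    (h2.mul_const C)
    (ae_of_all _ fun ω y _ => FF_hasDerivAt_x A k n y σ ω)).2

lemma HH_hasDerivAt_sigma (A : ℝ → ℂ) (hA : AEStronglyMeasurable A (volume : Measure ℝ))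
    (k n : ℕ) (x σ : ℝ)
    (h1 : Integrable (fun ω : ℝ => ‖A ω‖ * |ω| ^ (k + n)))
    (h2 : Integrable (fun ω : ℝ => ‖A ω‖ * |ω| ^ (k + (n + 1)))) :
    HasDerivAt (fun s => HH A k n x s) (HH A k (n + 1) x σ) σ := by
  obtain ⟨C, hC0, hC⟩ := qd_bound (n + 1)
  refine (hasDerivAt_integral_of_dominated_loc_of_deriv_le
    (F := fun s ω => FF A k n x s ω) (F' := fun s ω => FF A k (n + 1) x s ω)
    (bound := fun ω => ‖A ω‖ * |ω| ^ (k + (n + 1)) * C) (Metric.ball_mem_nhds σ one_pos)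
    (Eventually.of_forall fun s => FF_meas A hA k n x s)
    (FF_integrable A hA k n x σ h1)
    (FF_meas A hA k (n + 1) x σ)
    (ae_of_all _ fun ω s _ => FF_norm_le A k (n + 1) x s ω hC)
    (h2.mul_const C)
    (ae_of_all _ fun ω s _ => FF_hasDerivAt_sigma A k n x s ω)).2

lemma HH_norm_le (A : ℝ → ℂ) (hA : AEStronglyMeasurable A (volume : Measure ℝ))
    (k n : ℕ) (x σ : ℝ) {C : ℝ} (hC : ∀ t, |qd n t| ≤ C)
    (h1 : Integrable (fun ω : ℝ => ‖A ω‖ * |ω| ^ (k + n))) :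
    ‖HH A k n x σ‖ ≤ ∫ ω : ℝ, ‖A ω‖ * |ω| ^ (k + n) * C := by
  refine le_trans (norm_integral_le_integral_norm _) ?_
  refine integral_mono (FF_integrable A hA k n x σ h1).norm (h1.mul_const C) ?_
  exact fun ω => FF_norm_le A k n x σ ω hC

lemma iter_formula {E : Type*} [NormedAddCommGroup E] [NormedSpace ℝ E] :
    ∀ (k : ℕ) (u : ℕ → ℝ → E),
      (∀ j, j < k → ∀ t, HasDerivAt (u j) (u (j + 1) t) t) → iteratedDeriv k (u 0) = u k := by
  intro k
  induction k with
  | zero => intro u _; simp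
  | succ k ih =>
    intro u h
    rw [iteratedDeriv_succ']
    have hd : deriv (u 0) = u 1 := funext fun t => (h 0 (Nat.succ_pos k) t).deriv
    rw [hd]
    exact ih (fun j => u (j + 1)) (fun j hj t => h (j + 1) (by omega) t)

/-- Lemma 3.3: the mixed partial derivatives `∂^{k+n}Ψ_p^θ/∂x^k∂σ^n` with `2n + k ≤ 2l`
are uniformly bounded on the plane. -/
theorem stmt18 (l m : ℕ) (hl : 1 ≤ l) (hm : 0 < m) (p : ℝ) (hp : 0 < p)
    (hmp : p + 1 + 2 * (l : ℝ) < (m : ℝ))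
    (f : ℝ → ℝ) (hf : HypH m f)
    (hxf : MeasureTheory.Integrable (fun x : ℝ => x * f x))
    (θ : Theta) (c d : ℝ) (hc : c ≠ 0) (hd : d ≠ 0)
    (hF : ∀ ω : ℝ, FT (Lam θ p) ω =
      Mker θ c d p ω * ((Real.exp (-(ω ^ 2) / 2) : ℝ) : ℂ)) :
    ∀ k n : ℕ, 2 * n + k ≤ 2 * l →
      ∃ D : ℝ, 0 < D ∧ ∀ x σ : ℝ,
        |iteratedDeriv n (fun s => iteratedDeriv k (fun y => Psi f θ c d p y s) x) σ| ≤ D := by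
  intro k n hkn
  obtain ⟨hfC, hfI⟩ := hf
  set z : ℂ := ((1 / (2 * Real.pi) : ℝ) : ℂ) with hz
  set A : ℝ → ℂ := fun ω => z * (FT f ω * Mker θ c d p ω) with hAdef
  have hf0 : Integrable f := by simpa [iteratedDeriv_zero] using hfI 0 (Nat.zero_le m)
  have hFTcont : Continuous (FT f) := FT_continuous f hf0
  -- measurability of the multiplier
  have hMker : AEStronglyMeasurable (Mker θ c d p) (volume : Measure ℝ) := by
    have hrpow : Measurable fun ω : ℝ => |ω| ^ p := measurable_id.abs.pow_const p
    cases θ with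
    | e =>
      have : Measurable fun ω : ℝ => ((c * |ω| ^ p : ℝ) : ℂ) :=
        Complex.measurable_ofReal.comp ((hrpow.const_mul c))
      exact this.aestronglyMeasurable
    | o =>
      have hsign : Measurable Real.sign := by
        unfold Real.sign
        exact Measurable.ite (measurableSet_lt measurable_id measurable_const) measurable_const
          (Measurable.ite (measurableSet_lt measurable_const measurable_id) measurable_const
            measurable_const)
      have : Measurable fun ω : ℝ =>
          Complex.I * (d : ℂ) * ((Real.sign ω : ℝ) : ℂ) * ((|ω| ^ p : ℝ) : ℂ) :=
        ((measurable_const.mul (Complex.measurable_ofReal.comp hsign)).mul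
          (Complex.measurable_ofReal.comp hrpow))
      exact this.aestronglyMeasurable
  have hA_meas : AEStronglyMeasurable A (volume : Measure ℝ) :=
    (aestronglyMeasurable_const.mul (hFTcont.aestronglyMeasurable.mul hMker))
  -- decay of the Fourier transform
  set C0 : ℝ := ∫ x, |f x| with hC0def
  set Cm : ℝ := ∫ x, |iteratedDeriv m f x| with hCmdef
  have hC0 : 0 ≤ C0 := integral_nonneg fun x => abs_nonneg _
  have hCm : 0 ≤ Cm := integral_nonneg fun x => abs_nonneg _
  have hFT1 : ∀ ω, ‖FT f ω‖ ≤ C0 := fun ω => norm_FT_le f ω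
  have hFTm : ∀ ω : ℝ, |ω| ^ m * ‖FT f ω‖ ≤ Cm := by
    intro ω
    have h1 := norm_FT_le (iteratedDeriv m f) ω
    rw [FT_iteratedDeriv f m hfC hfI ω] at h1
    have h2 : ‖(Complex.I * (ω:ℂ)) ^ m * FT f ω‖ = |ω| ^ m * ‖FT f ω‖ := by
      rw [norm_mul, norm_pow, norm_mul, Complex.norm_I, one_mul,
        Complex.norm_real, Real.norm_eq_abs]
    rw [h2] at h1
    exact h1
  -- the master integrability estimate
  have hW : ∀ j : ℕ, j ≤ 2 * l → Integrable (fun ω : ℝ => ‖A ω‖ * |ω| ^ j) := by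
    intro j hj
    have hjl : (j : ℝ) ≤ 2 * l := by exact_mod_cast hj
    set s : ℝ := p + j with hsdef
    set r : ℝ := (m : ℝ) - s with hrdef
    have hs0 : 0 ≤ s := by positivity
    have hr1 : 1 < r := by rw [hrdef, hsdef]; linarith
    have hr0 : 0 ≤ r := by linarith
    set K : ℝ := max |c| |d| with hKdef
    have hK0 : 0 ≤ K := le_trans (abs_nonneg c) (le_max_left _ _)
    have hM : ∀ ω : ℝ, ‖Mker θ c d p ω‖ ≤ K * |ω| ^ p := by
      intro ω
      have hrp : (0:ℝ) ≤ |ω| ^ p := Real.rpow_nonneg (abs_nonneg ω) p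
      cases θ with
      | e =>
        show ‖((c * |ω| ^ p : ℝ) : ℂ)‖ ≤ K * |ω| ^ p
        rw [Complex.norm_real, Real.norm_eq_abs, abs_mul, abs_of_nonneg hrp]
        exact mul_le_mul_of_nonneg_right (le_max_left _ _) hrp
      | o =>
        show ‖Complex.I * (d : ℂ) * ((Real.sign ω : ℝ) : ℂ) * ((|ω| ^ p : ℝ) : ℂ)‖ ≤ K * |ω| ^ p
        simp only [norm_mul, Complex.norm_I, Complex.norm_real, Real.norm_eq_abs,
          one_mul]
        rw [abs_of_nonneg hrp]
        have hsign : |Real.sign ω| ≤ 1 := by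
          rcases Real.sign_apply_eq ω with h | h | h <;> simp [h]
        calc |d| * |Real.sign ω| * |ω| ^ p ≤ |d| * 1 * |ω| ^ p := by
              exact mul_le_mul_of_nonneg_right
                (mul_le_mul_of_nonneg_left hsign (abs_nonneg d)) hrp
          _ = |d| * |ω| ^ p := by ring
          _ ≤ K * |ω| ^ p := mul_le_mul_of_nonneg_right (le_max_right _ _) hrp
    -- key pointwise decay estimate
    have hkey : ∀ ω : ℝ, ‖FT f ω‖ * (|ω| ^ p * |ω| ^ j) ≤
        ((C0 + Cm) * 2 ^ r) * (1 + |ω|) ^ (-r) := by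
      intro ω
      have h1pos : (0:ℝ) < 1 + |ω| := by positivity
      have hrpj : |ω| ^ p * |ω| ^ j = |ω| ^ s := by
        rcases eq_or_ne ω 0 with h0 | h0
        · rw [h0]
          simp [Real.zero_rpow (ne_of_gt hp), Real.zero_rpow (ne_of_gt (by positivity : 0 < s))]
        · rw [← Real.rpow_natCast |ω| j, ← Real.rpow_add (abs_pos.2 h0), hsdef]
      rw [hrpj]
      have hmain : ‖FT f ω‖ * |ω| ^ s * (1 + |ω|) ^ r ≤ (C0 + Cm) * 2 ^ r := by
        rcases le_or_gt (|ω|) 1 with hω1 | hω1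
        · have e1 : |ω| ^ s ≤ 1 := Real.rpow_le_one (abs_nonneg ω) hω1 hs0
          have e2 : (1 + |ω|) ^ r ≤ 2 ^ r :=
            Real.rpow_le_rpow h1pos.le (by linarith) hr0
          have e3 : ‖FT f ω‖ * |ω| ^ s ≤ C0 * 1 :=
            mul_le_mul (hFT1 ω) e1 (Real.rpow_nonneg (abs_nonneg ω) s) hC0
          have e4 : ‖FT f ω‖ * |ω| ^ s * (1 + |ω|) ^ r ≤ (C0 * 1) * 2 ^ r :=
            mul_le_mul e3 e2 (Real.rpow_nonneg h1pos.le r) (by positivity)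
          have e5 : (0:ℝ) ≤ (2:ℝ) ^ r := Real.rpow_nonneg (by norm_num) r
          nlinarith
        · have e2 : (1 + |ω|) ^ r ≤ 2 ^ r * |ω| ^ r := by
            calc (1 + |ω|) ^ r ≤ (2 * |ω|) ^ r :=
                  Real.rpow_le_rpow h1pos.le (by linarith) hr0
              _ = 2 ^ r * |ω| ^ r := Real.mul_rpow (by norm_num) (abs_nonneg ω)
          have e4 : |ω| ^ s * |ω| ^ r = |ω| ^ m := by
            rw [← Real.rpow_add (by linarith : (0:ℝ) < |ω|)]
            have hsr : s + r = (m : ℝ) := by rw [hrdef]; ring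
            rw [hsr, Real.rpow_natCast]
          have e5 : (0:ℝ) ≤ (2:ℝ) ^ r := Real.rpow_nonneg (by norm_num) r
          calc ‖FT f ω‖ * |ω| ^ s * (1 + |ω|) ^ r
              ≤ ‖FT f ω‖ * |ω| ^ s * (2 ^ r * |ω| ^ r) := by
                refine mul_le_mul_of_nonneg_left e2 ?_
                exact mul_nonneg (norm_nonneg _) (Real.rpow_nonneg (abs_nonneg ω) s)
            _ = (|ω| ^ m * ‖FT f ω‖) * 2 ^ r := by rw [← e4]; ring
            _ ≤ Cm * 2 ^ r := mul_le_mul_of_nonneg_right (hFTm ω) e5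
            _ ≤ (C0 + Cm) * 2 ^ r := mul_le_mul_of_nonneg_right (by linarith) e5
      calc ‖FT f ω‖ * |ω| ^ s
          = (‖FT f ω‖ * |ω| ^ s * (1 + |ω|) ^ r) * (1 + |ω|) ^ (-r) := by
            rw [mul_assoc, ← Real.rpow_add h1pos]
            simp
        _ ≤ ((C0 + Cm) * 2 ^ r) * (1 + |ω|) ^ (-r) :=
            mul_le_mul_of_nonneg_right hmain (Real.rpow_nonneg h1pos.le _)
    -- integrable majorant
    have hg : Integrable (fun ω : ℝ => (‖z‖ * K * ((C0 + Cm) * 2 ^ r)) * (1 + |ω|) ^ (-r)) := by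
      have h0 : Integrable (fun ω : ℝ => (1 + ‖ω‖) ^ (-r)) :=
        integrable_one_add_norm (by simp [Module.finrank_self]; linarith)
      simpa [Real.norm_eq_abs] using h0.const_mul (‖z‖ * K * ((C0 + Cm) * 2 ^ r))
    have hmeas : AEStronglyMeasurable (fun ω : ℝ => ‖A ω‖ * |ω| ^ j) (volume : Measure ℝ) :=
      hA_meas.norm.mul ((continuous_abs.pow j).aestronglyMeasurable)
    refine hg.mono' hmeas (ae_of_all _ fun ω => ?_)
    have hnn : (0:ℝ) ≤ ‖A ω‖ * |ω| ^ j := by positivity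
    rw [Real.norm_eq_abs, abs_of_nonneg hnn]
    have hAle : ‖A ω‖ ≤ ‖z‖ * (‖FT f ω‖ * (K * |ω| ^ p)) := by
      rw [hAdef]
      simp only [norm_mul]
      exact mul_le_mul_of_nonneg_left
        (mul_le_mul_of_nonneg_left (hM ω) (norm_nonneg _)) (norm_nonneg z)
    calc ‖A ω‖ * |ω| ^ j ≤ (‖z‖ * (‖FT f ω‖ * (K * |ω| ^ p))) * |ω| ^ j := by
          exact mul_le_mul_of_nonneg_right hAle (by positivity)
      _ = (‖z‖ * K) * (‖FT f ω‖ * (|ω| ^ p * |ω| ^ j)) := by ring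
      _ ≤ (‖z‖ * K) * (((C0 + Cm) * 2 ^ r) * (1 + |ω|) ^ (-r)) := by
          exact mul_le_mul_of_nonneg_left (hkey ω) (by positivity)
      _ = (‖z‖ * K * ((C0 + Cm) * 2 ^ r)) * (1 + |ω|) ^ (-r) := by ring
  -- Psi is the real part of HH A 0 0
  have hPsi : ∀ x σ : ℝ, Psi f θ c d p x σ = (HH A 0 0 x σ).re := by
    intro x σ
    have heq : z * (∫ ω : ℝ, FT f ω * Mker θ c d p ω *
        ((Real.exp (-(ω ^ 2 * σ ^ 2) / 2) : ℝ) : ℂ) * Complex.exp (Complex.I * ω * x)) =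
        HH A 0 0 x σ := by
      rw [← integral_const_mul]
      unfold HH
      congr 1
      funext ω
      have hq0 : ((qd 0 (ω * σ) : ℝ) : ℂ) = ((Real.exp (-(ω ^ 2 * σ ^ 2) / 2) : ℝ) : ℂ) := by
        norm_cast
        rw [qd, iteratedDeriv_zero]
        show Real.exp (-((ω * σ) ^ 2 / 2)) = _
        congr 1
        ring
      rw [FF, hq0]
      ring
    rw [Psi, heq]
  -- inner iterated derivative in x
  have hinner : ∀ s x0 : ℝ,
      iteratedDeriv k (fun y => Psi f θ c d p y s) x0 = (HH A k 0 x0 s).re := by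
    intro s x0
    have heq : (fun y => Psi f θ c d p y s) = fun y => (HH A 0 0 y s).re :=
      funext fun y => hPsi y s
    rw [heq]
    have hu : ∀ j, j < k → ∀ t, HasDerivAt (fun y => (HH A j 0 y s).re)
        ((HH A (j + 1) 0 t s).re) t := by
      intro j hj t
      have hH := HH_hasDerivAt_x A hA_meas j 0 t s (hW (j + 0) (by omega)) (hW (j + 1 + 0) (by omega))
      exact Complex.reCLM.hasFDerivAt.comp_hasDerivAt t hH
    exact congrFun (iter_formula k (fun j => fun y => (HH A j 0 y s).re) hu) x0
  -- outer iterated derivative in σ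
  have houter : ∀ x σ : ℝ,
      iteratedDeriv n (fun s => iteratedDeriv k (fun y => Psi f θ c d p y s) x) σ =
      (HH A k n x σ).re := by
    intro x σ
    have heq : (fun s => iteratedDeriv k (fun y => Psi f θ c d p y s) x) =
        fun s => (HH A k 0 x s).re := funext fun s => hinner s x
    rw [heq]
    have hu : ∀ j, j < n → ∀ t, HasDerivAt (fun s => (HH A k j x s).re)
        ((HH A k (j + 1) x t).re) t := by
      intro j hj t
      have hH := HH_hasDerivAt_sigma A hA_meas k j x t (hW (k + j) (by omega))
        (hW (k + (j + 1)) (by omega))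
      exact Complex.reCLM.hasFDerivAt.comp_hasDerivAt t hH
    exact congrFun (iter_formula n (fun j => fun s => (HH A k j x s).re) hu) σ
  -- final bound
  obtain ⟨C, hCpos, hC⟩ := qd_bound n
  have hint0 : 0 ≤ ∫ ω : ℝ, ‖A ω‖ * |ω| ^ (k + n) * C :=
    integral_nonneg fun ω => by positivity
  refine ⟨(∫ ω : ℝ, ‖A ω‖ * |ω| ^ (k + n) * C) + 1, by linarith, fun x σ => ?_⟩
  rw [houter x σ]
  have h1 : |(HH A k n x σ).re| ≤ ‖HH A k n x σ‖ := Complex.abs_re_le_norm _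
  have h2 := HH_norm_le A hA_meas k n x σ hC (hW (k + n) (by omega))
  linarith
end
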